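/- arXiv:2402.03955 — 2 statements merged into one kernel-verified Lean document; each statement's English description precedes it below -/
import Mathlib

section
/- Consider the forced Lur'e system ẋ(t) = Ax(t) + B₁f(C₁x(t)) + B₂w(t) under (A1) and (A2) with time-independent f, and assume hypothesis (H1) holds. Let 1 ≤ s < ∞. If (w_a, x_a) and (w_b, x_b) are trajectories of the system such that t ↦ e^{γt}(w_a − w_b)(t) belongs to L^s(ℝ₊, ℝ^{m₂}) for some γ > 0, then x_a(t) − x_b(t) → 0 exponentially as t → ∞, i.e. there exist constants M ≥ 0 and β > 0 such that ‖x_a(t) − x_b(t)‖ ≤ M e^{−βt} for all t ≥ 0. -/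
open Matrix MeasureTheory Filter Topology

noncomputable section

private lemma aux_antitone (φ : ℝ → ℝ) {a b : ℝ} (hab : a ≤ b)
    (hc : ContinuousOn φ (Set.Icc a b))
    (h : ∀ t ∈ Set.Ico a b, ∃ δ > 0, ∀ u, t ≤ u → u ≤ t + δ → u ≤ b → φ u ≤ φ t) :
    φ b ≤ φ a := by
  have hsub : Set.Icc a b ⊆ {t | φ t ≤ φ a} := by
    apply IsClosed.Icc_subset_of_forall_exists_gt
    · have h1 := hc.preimage_isClosed_of_isClosed isClosed_Icc (isClosed_Iic (a := φ a))
      have h2 : {t | φ t ≤ φ a} ∩ Set.Icc a b = Set.Icc a b ∩ φ ⁻¹' (Set.Iic (φ a)) := by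
        ext t; simp [and_comm]
      rw [h2]; exact h1
    · exact le_refl (φ a)
    · rintro x ⟨hx1, hx2⟩ y hy
      obtain ⟨δ, hδ, hl⟩ := h x hx2
      have hxu : x < min (min (x + δ) b) y :=
        lt_min (lt_min (by linarith) hx2.2) hy
      refine ⟨min (min (x + δ) b) y, ?_, hxu, min_le_right _ _⟩
      have := hl (min (min (x + δ) b) y) hxu.le
        (le_trans (min_le_left _ _) (min_le_left _ _))
        (le_trans (min_le_left _ _) (min_le_right _ _))
      exact le_trans this hx1
  exact hsub ⟨hab, le_rfl⟩

private lemma mulVec_abs_le {k l : ℕ} (M : Matrix (Fin k) (Fin l) ℝ)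
    (hM : ∀ i j, 0 ≤ M i j) (v : Fin l → ℝ) (i : Fin k) :
    |M.mulVec v i| ≤ M.mulVec (fun j => |v j|) i := by
  simp only [Matrix.mulVec, dotProduct]
  calc |∑ j, M i j * v j| ≤ ∑ j, |M i j * v j| := Finset.abs_sum_le_sum_abs _ _
    _ = ∑ j, M i j * |v j| := by
        refine Finset.sum_congr rfl fun j _ => ?_
        rw [abs_mul, abs_of_nonneg (hM i j)]

private lemma mulVec_mono {k l : ℕ} (M : Matrix (Fin k) (Fin l) ℝ)
    (hM : ∀ i j, 0 ≤ M i j) {v v' : Fin l → ℝ} (hv : ∀ j, v j ≤ v' j) (i : Fin k) :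
    M.mulVec v i ≤ M.mulVec v' i := by
  simp only [Matrix.mulVec, dotProduct]
  exact Finset.sum_le_sum fun j _ => mul_le_mul_of_nonneg_left (hv j) (hM i j)

private lemma II.clm_comp' {E F : Type*} [NormedAddCommGroup E] [NormedSpace ℝ E]
    [NormedAddCommGroup F] [NormedSpace ℝ F] {f : ℝ → E} {μ : Measure ℝ} {a b : ℝ}
    (L : E →L[ℝ] F) (hf : IntervalIntegrable f μ a b) :
    IntervalIntegrable (fun t => L (f t)) μ a b :=
  ⟨L.integrable_comp hf.1, L.integrable_comp hf.2⟩

private lemma intervalIntegral_pi_apply {k : ℕ} {f : ℝ → Fin k → ℝ} {μ : Measure ℝ} {a b : ℝ}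
    (hf : IntervalIntegrable f μ a b) (i : Fin k) :
    (∫ t in a..b, f t ∂μ) i = ∫ t in a..b, f t i ∂μ := by
  have := (ContinuousLinearMap.proj (R := ℝ) (φ := fun _ : Fin k => ℝ) i).intervalIntegral_comp_comm hf
  simpa using this.symm

/-- A square real matrix is Metzler if all its off-diagonal entries are nonnegative. -/
def IsMetzler {n : ℕ} (A : Matrix (Fin n) (Fin n) ℝ) : Prop :=
  ∀ i j, i ≠ j → 0 ≤ A i j

/-- A pair `(w, x)` is a trajectory of the forced Lur'e system
`ẋ = Ax + B₁ f(C₁ x) + B₂ w` (time-independent nonlinearity) on `ℝ₊`. -/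
def IsTrajectory {n m₁ m₂ p₁ : ℕ}
    (A : Matrix (Fin n) (Fin n) ℝ) (B₁ : Matrix (Fin n) (Fin m₁) ℝ)
    (B₂ : Matrix (Fin n) (Fin m₂) ℝ) (C₁ : Matrix (Fin p₁) (Fin n) ℝ)
    (f : (Fin p₁ → ℝ) → Fin m₁ → ℝ)
    (w : ℝ → Fin m₂ → ℝ) (x : ℝ → Fin n → ℝ) : Prop :=
  ContinuousOn x (Set.Ici 0) ∧
  ∀ t : ℝ, 0 ≤ t →
    x t = x 0 + ∫ s in (0:ℝ)..t,
      (A.mulVec (x s) + B₁.mulVec (f (C₁.mulVec (x s))) + B₂.mulVec (w s))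

set_option maxHeartbeats 4000000

/-- if `t ↦ e^{γt}(w_a − w_b)(t)` is in `L^s`, `1 ≤ s < ∞`, for some `γ > 0`,
then `x_a(t) − x_b(t) → 0` exponentially as `t → ∞`. -/
theorem stmt13 {n m₁ m₂ p₁ : ℕ}
    (A : Matrix (Fin n) (Fin n) ℝ) (B₁ : Matrix (Fin n) (Fin m₁) ℝ)
    (B₂ : Matrix (Fin n) (Fin m₂) ℝ) (C₁ : Matrix (Fin p₁) (Fin n) ℝ)
    -- (A1)
    (hA : IsMetzler A) (hB₁ : ∀ i j, 0 ≤ B₁ i j) (hB₂ : ∀ i j, 0 ≤ B₂ i j)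
    (hC₁ : ∀ i j, 0 ≤ C₁ i j)
    -- (A2), time-independent
    (f : (Fin p₁ → ℝ) → Fin m₁ → ℝ) (Δ : Matrix (Fin m₁) (Fin p₁) ℝ)
    (hΔ : ∀ i j, 0 ≤ Δ i j)
    (hf_inc : ∀ ζ₁ ζ₂ : Fin p₁ → ℝ,
        ∀ i, |f ζ₁ i - f ζ₂ i| ≤ Δ.mulVec (fun j => |ζ₁ j - ζ₂ j|) i)
    -- (H1)
    (ξ : ℝ) (hξ : 0 < ξ) (p : Fin n → ℝ) (hp : ∀ i, 0 < p i)
    (hH1 : ∀ j, vecMul p (A + B₁ * Δ * C₁) j ≤ -(ξ * p j))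
    -- two trajectories
    (w_a w_b : ℝ → Fin m₂ → ℝ) (x_a x_b : ℝ → Fin n → ℝ)
    (hwa : LocallyIntegrableOn w_a (Set.Ici 0) volume)
    (hwb : LocallyIntegrableOn w_b (Set.Ici 0) volume)
    (ha : IsTrajectory A B₁ B₂ C₁ f w_a x_a)
    (hb : IsTrajectory A B₁ B₂ C₁ f w_b x_b)
    -- t ↦ e^{γt}(w_a − w_b)(t) ∈ L^s(ℝ₊, ℝ^{m₂}) for some γ > 0
    (s : ℝ) (hs : 1 ≤ s) (γ : ℝ) (hγ : 0 < γ)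
    (hmeas : AEStronglyMeasurable (fun t => w_a t - w_b t) (volume.restrict (Set.Ici 0)))
    (hLs : IntegrableOn (fun t => ‖Real.exp (γ * t) • (w_a t - w_b t)‖ ^ s)
      (Set.Ici 0) volume) :
    ∃ M : ℝ, 0 ≤ M ∧ ∃ β : ℝ, 0 < β ∧
      ∀ t : ℝ, 0 ≤ t → ‖x_a t - x_b t‖ ≤ M * Real.exp (-β * t) := by
  obtain ⟨hxacont, hxaeq⟩ := ha
  obtain ⟨hxbcont, hxbeq⟩ := hb
  rcases Nat.eq_zero_or_pos n with hn | hn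
  · subst hn
    refine ⟨0, le_rfl, 1, one_pos, fun t ht => ?_⟩
    have hz : x_a t - x_b t = 0 := funext fun i => i.elim0
    simp [hz]
  haveI hne : Nonempty (Fin n) := ⟨⟨0, hn⟩⟩
  -- abbreviations
  set dw : ℝ → Fin m₂ → ℝ := fun t => w_a t - w_b t with hdwdef
  set zz : ℝ → Fin n → ℝ := fun t => x_a t - x_b t with hzzdef
  set df : ℝ → Fin m₁ → ℝ :=
    fun t => f (C₁.mulVec (x_a t)) - f (C₁.mulVec (x_b t)) with hdfdef
  set hh : ℝ → Fin n → ℝ :=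
    fun t => A.mulVec (zz t) + B₁.mulVec (df t) + B₂.mulVec (dw t) with hhhdef
  set Vv : ℝ → ℝ := fun t => ∑ i, p i * |zz t i| with hVdef
  set gg : ℝ → ℝ := fun t => ∑ i, ∑ j, p i * B₂ i j * |dw t j| with hgdef
  -- continuity facts
  have hzc : ContinuousOn zz (Set.Ici 0) := hxacont.sub hxbcont
  have hfc : Continuous f := by
    have hc0 : 0 ≤ ∑ i, ∑ j, Δ i j :=
      Finset.sum_nonneg fun i _ => Finset.sum_nonneg fun j _ => hΔ i j
    have key : ∀ ζ₁ ζ₂ : (Fin p₁ → ℝ), dist (f ζ₁) (f ζ₂) ≤ (∑ i, ∑ j, Δ i j) * dist ζ₁ ζ₂ := by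
      intro ζ₁ ζ₂
      rw [dist_pi_le_iff (mul_nonneg hc0 dist_nonneg)]
      intro i
      rw [Real.dist_eq]
      calc |f ζ₁ i - f ζ₂ i| ≤ Δ.mulVec (fun j => |ζ₁ j - ζ₂ j|) i := hf_inc ζ₁ ζ₂ i
        _ = ∑ j, Δ i j * |ζ₁ j - ζ₂ j| := by simp [Matrix.mulVec, dotProduct]
        _ ≤ ∑ j, Δ i j * dist ζ₁ ζ₂ := Finset.sum_le_sum fun j _ =>
            mul_le_mul_of_nonneg_left (by rw [← Real.dist_eq]; exact dist_le_pi_dist ζ₁ ζ₂ j) (hΔ i j)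
        _ = (∑ j, Δ i j) * dist ζ₁ ζ₂ := (Finset.sum_mul _ _ _).symm
        _ ≤ (∑ i, ∑ j, Δ i j) * dist ζ₁ ζ₂ := mul_le_mul_of_nonneg_right
            (Finset.single_le_sum (f := fun i => ∑ j, Δ i j)
              (fun i _ => Finset.sum_nonneg fun j _ => hΔ i j) (Finset.mem_univ i)) dist_nonneg
    exact (LipschitzWith.of_dist_le_mul (K := (∑ i, ∑ j, Δ i j).toNNReal) (fun x y => by
      rw [Real.coe_toNNReal _ hc0]; exact key x y)).continuous
  have hmvc : ∀ {k l : ℕ} (M : Matrix (Fin k) (Fin l) ℝ) (F : ℝ → Fin l → ℝ),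
      ContinuousOn F (Set.Ici 0) → ContinuousOn (fun τ => M.mulVec (F τ)) (Set.Ici 0) := by
    intro k l M F hF
    exact (continuous_const.matrix_mulVec continuous_id).comp_continuousOn hF
  have hdfc : ContinuousOn df (Set.Ici 0) :=
    (hfc.comp_continuousOn (hmvc C₁ x_a hxacont)).sub
      (hfc.comp_continuousOn (hmvc C₁ x_b hxbcont))
  have hVc : ContinuousOn Vv (Set.Ici 0) := by
    apply continuousOn_finset_sum
    intro i _
    exact continuousOn_const.mul ((continuous_apply i).comp_continuousOn hzc).abs
  -- integrability facts
  have hIccIci : ∀ u v : ℝ, 0 ≤ u → Set.Icc u v ⊆ Set.Ici 0 :=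
    fun u v hu x hx => le_trans hu hx.1
  have hIocIci : ∀ u v : ℝ, 0 ≤ u → Set.Ioc u v ⊆ Set.Ici 0 :=
    fun u v hu x hx => le_trans hu hx.1.le
  have hwaI : ∀ u v : ℝ, 0 ≤ u → IntegrableOn w_a (Set.Icc u v) volume :=
    fun u v hu => hwa.integrableOn_compact_subset (hIccIci u v hu) isCompact_Icc
  have hwbI : ∀ u v : ℝ, 0 ≤ u → IntegrableOn w_b (Set.Icc u v) volume :=
    fun u v hu => hwb.integrableOn_compact_subset (hIccIci u v hu) isCompact_Icc
  have hdwI : ∀ u v : ℝ, 0 ≤ u → IntegrableOn dw (Set.Icc u v) volume :=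
    fun u v hu => (hwaI u v hu).sub (hwbI u v hu)
  have hcIIn : ∀ (F : ℝ → Fin n → ℝ), ContinuousOn F (Set.Ici 0) → ∀ u v : ℝ, 0 ≤ u → u ≤ v →
      IntervalIntegrable F volume u v := by
    intro F hF u v hu huv
    apply ContinuousOn.intervalIntegrable
    rw [Set.uIcc_of_le huv]
    exact hF.mono (hIccIci u v hu)
  have hcIIr : ∀ (F : ℝ → ℝ), ContinuousOn F (Set.Ici 0) → ∀ u v : ℝ, 0 ≤ u → u ≤ v →
      IntervalIntegrable F volume u v := by
    intro F hF u v hu huv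
    apply ContinuousOn.intervalIntegrable
    rw [Set.uIcc_of_le huv]
    exact hF.mono (hIccIci u v hu)
  have hVII : ∀ u v : ℝ, 0 ≤ u → u ≤ v → IntervalIntegrable Vv volume u v :=
    fun u v hu huv => hcIIr Vv hVc u v hu huv
  have hVI : ∀ u v : ℝ, 0 ≤ u → IntegrableOn Vv (Set.Icc u v) volume :=
    fun u v hu => (hVc.mono (hIccIci u v hu)).integrableOn_Icc
  have hwaII : ∀ u v : ℝ, 0 ≤ u → u ≤ v → IntervalIntegrable w_a volume u v := by
    intro u v hu huv
    rw [intervalIntegrable_iff_integrableOn_Ioc_of_le huv]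
    exact (hwaI u v hu).mono_set Set.Ioc_subset_Icc_self
  have hwbII : ∀ u v : ℝ, 0 ≤ u → u ≤ v → IntervalIntegrable w_b volume u v := by
    intro u v hu huv
    rw [intervalIntegrable_iff_integrableOn_Ioc_of_le huv]
    exact (hwbI u v hu).mono_set Set.Ioc_subset_Icc_self
  have hdwII : ∀ u v : ℝ, 0 ≤ u → u ≤ v → IntervalIntegrable dw volume u v := by
    intro u v hu huv
    rw [intervalIntegrable_iff_integrableOn_Ioc_of_le huv]
    exact (hdwI u v hu).mono_set Set.Ioc_subset_Icc_self
  -- matrix mulVec as CLM (for integrability transfers)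
  have hmvII : ∀ {l : ℕ} (M : Matrix (Fin n) (Fin l) ℝ) (F : ℝ → Fin l → ℝ) (u v : ℝ),
      IntervalIntegrable F volume u v → IntervalIntegrable (fun τ => M.mulVec (F τ)) volume u v := by
    intro l M F u v hF
    have h1 := II.clm_comp' (LinearMap.toContinuousLinearMap (Matrix.mulVecLin M)) hF
    simpa using h1
  -- the forcing integrands of the two trajectories
  have hFaII : ∀ u v : ℝ, 0 ≤ u → u ≤ v → IntervalIntegrable
      (fun τ => A.mulVec (x_a τ) + B₁.mulVec (f (C₁.mulVec (x_a τ))) + B₂.mulVec (w_a τ))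
      volume u v := by
    intro u v hu huv
    have h1 : IntervalIntegrable
        (fun τ => A.mulVec (x_a τ) + B₁.mulVec (f (C₁.mulVec (x_a τ)))) volume u v :=
      hcIIn _ ((hmvc A x_a hxacont).add
        (hmvc B₁ _ (hfc.comp_continuousOn (hmvc C₁ x_a hxacont)))) u v hu huv
    exact h1.add (hmvII B₂ w_a u v (hwaII u v hu huv))
  have hFbII : ∀ u v : ℝ, 0 ≤ u → u ≤ v → IntervalIntegrable
      (fun τ => A.mulVec (x_b τ) + B₁.mulVec (f (C₁.mulVec (x_b τ))) + B₂.mulVec (w_b τ))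
      volume u v := by
    intro u v hu huv
    have h1 : IntervalIntegrable
        (fun τ => A.mulVec (x_b τ) + B₁.mulVec (f (C₁.mulVec (x_b τ)))) volume u v :=
      hcIIn _ ((hmvc A x_b hxbcont).add
        (hmvc B₁ _ (hfc.comp_continuousOn (hmvc C₁ x_b hxbcont)))) u v hu huv
    exact h1.add (hmvII B₂ w_b u v (hwbII u v hu huv))
  have hhhII : ∀ u v : ℝ, 0 ≤ u → u ≤ v → IntervalIntegrable hh volume u v := by
    intro u v hu huv
    have h1 : IntervalIntegrable (fun τ => A.mulVec (zz τ) + B₁.mulVec (df τ)) volume u v :=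
      hcIIn _ ((hmvc A zz hzc).add (hmvc B₁ df hdfc)) u v hu huv
    have h2 := h1.add (hmvII B₂ dw u v (hdwII u v hu huv))
    rw [hhhdef]
    exact h2
  have hhiII : ∀ u v : ℝ, 0 ≤ u → u ≤ v → ∀ i,
      IntervalIntegrable (fun τ => hh τ i) volume u v := by
    intro u v hu huv i
    have h1 := II.clm_comp' (ContinuousLinearMap.proj (R := ℝ) (φ := fun _ : Fin n => ℝ) i)
      (hhhII u v hu huv)
    simpa using h1
  -- the integral equation for the difference
  have hzeq : ∀ u v : ℝ, 0 ≤ u → u ≤ v → zz v - zz u = ∫ τ in u..v, hh τ := by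
    intro u v hu huv
    have hv0 : 0 ≤ v := le_trans hu huv
    have e1 : x_a v - x_a u = ∫ τ in u..v,
        (A.mulVec (x_a τ) + B₁.mulVec (f (C₁.mulVec (x_a τ))) + B₂.mulVec (w_a τ)) := by
      rw [hxaeq v hv0, hxaeq u hu]
      have := intervalIntegral.integral_interval_sub_left
        (hFaII 0 v le_rfl hv0) (hFaII 0 u le_rfl hu)
      rw [← this]; abel
    have e2 : x_b v - x_b u = ∫ τ in u..v,
        (A.mulVec (x_b τ) + B₁.mulVec (f (C₁.mulVec (x_b τ))) + B₂.mulVec (w_b τ)) := by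
      rw [hxbeq v hv0, hxbeq u hu]
      have := intervalIntegral.integral_interval_sub_left
        (hFbII 0 v le_rfl hv0) (hFbII 0 u le_rfl hu)
      rw [← this]; abel
    have e3 : zz v - zz u = (x_a v - x_a u) - (x_b v - x_b u) := by
      rw [hzzdef]; exact sub_sub_sub_comm _ _ _ _
    rw [e3, e1, e2, ← intervalIntegral.integral_sub (hFaII u v hu huv) (hFbII u v hu huv)]
    apply intervalIntegral.integral_congr
    intro τ _
    rw [hhhdef, hzzdef, hdfdef, hdwdef]
    simp only [Matrix.mulVec_sub]
    abel
  have hzeqi : ∀ u v : ℝ, 0 ≤ u → u ≤ v → ∀ i, zz v i - zz u i = ∫ τ in u..v, hh τ i := by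
    intro u v hu huv i
    have h1 := congrFun (hzeq u v hu huv) i
    rw [intervalIntegral_pi_apply (hhhII u v hu huv) i] at h1
    simpa using h1
  -- integrability of gg
  have hggI : ∀ u v : ℝ, 0 ≤ u → IntegrableOn gg (Set.Icc u v) volume := by
    intro u v hu
    apply integrable_finset_sum
    intro i _
    apply integrable_finset_sum
    intro j _
    apply Integrable.const_mul
    have h0 : IntegrableOn (fun τ => dw τ j) (Set.Icc u v) volume := by
      have := (ContinuousLinearMap.proj (R := ℝ) (φ := fun _ : Fin m₂ => ℝ) j).integrable_comp
        (hdwI u v hu)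
      simpa [IntegrableOn] using this
    exact h0.abs
  have hggII : ∀ u v : ℝ, 0 ≤ u → u ≤ v → IntervalIntegrable gg volume u v := by
    intro u v hu huv
    rw [intervalIntegrable_iff_integrableOn_Ioc_of_le huv]
    exact (hggI u v hu).mono_set Set.Ioc_subset_Icc_self
  have hψII : ∀ u v : ℝ, 0 ≤ u → u ≤ v →
      IntervalIntegrable (fun τ => -ξ * Vv τ + gg τ) volume u v :=
    fun u v hu huv => ((hVII u v hu huv).const_mul (-ξ)).add (hggII u v hu huv)
  have hVnn : ∀ t, 0 ≤ Vv t :=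
    fun t => Finset.sum_nonneg fun i _ => mul_nonneg (hp i).le (abs_nonneg _)
  have hggnn : ∀ t, 0 ≤ gg t := fun t => Finset.sum_nonneg fun i _ =>
    Finset.sum_nonneg fun j _ => mul_nonneg (mul_nonneg (hp i).le (hB₂ i j)) (abs_nonneg _)
  -- The key differential-integral inequality, global two-point form
  have hR : ∀ t₁ t₂ : ℝ, 0 ≤ t₁ → t₁ ≤ t₂ →
      Vv t₂ ≤ Vv t₁ + ∫ τ in t₁..t₂, (-ξ * Vv τ + gg τ) := by
    intro t₁ t₂ h10 h12
    rcases eq_or_lt_of_le h12 with rfl | h12'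
    · simp
    apply le_of_forall_pos_le_add
    intro η hη
    set ε : ℝ := η / (t₂ - t₁) with hεdef
    have hε : 0 < ε := div_pos hη (by linarith)
    set φφ : ℝ → ℝ := fun r => Vv r - (∫ τ in t₁..r, (-ξ * Vv τ + gg τ)) - ε * r with hφdef
    have hmain : φφ t₂ ≤ φφ t₁ := by
      apply aux_antitone φφ h12
      · -- continuity of φφ on [t₁, t₂]
        have hVcc : ContinuousOn Vv (Set.Icc t₁ t₂) := hVc.mono (hIccIci t₁ t₂ h10)
        have hprim : ContinuousOn (fun r => ∫ τ in t₁..r, (-ξ * Vv τ + gg τ)) (Set.Icc t₁ t₂) := by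
          have hint : IntegrableOn (fun τ => -ξ * Vv τ + gg τ) (Set.uIcc t₁ t₂) volume := by
            rw [Set.uIcc_of_le h12]
            exact ((hVI t₁ t₂ h10).const_mul (-ξ)).add (hggI t₁ t₂ h10)
          have h2 := intervalIntegral.continuousOn_primitive_interval hint
          rwa [Set.uIcc_of_le h12] at h2
        exact (hVcc.sub hprim).sub ((continuous_const.mul continuous_id).continuousOn)
      · -- local decrease
        intro a haa
        obtain ⟨ha1, ha2⟩ := haa
        have ha0 : 0 ≤ a := le_trans h10 ha1
        -- setup of constants
        set D : ℝ := (∑ i, p i * (2 * |A i i|)) + 1 with hDdef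
        have hD1 : 1 ≤ D := le_add_of_nonneg_left
          (Finset.sum_nonneg fun i _ => mul_nonneg (hp i).le (by positivity))
        have hD0 : 0 < D := lt_of_lt_of_le one_pos hD1
        set ε' : ℝ := ε / D with hε'def
        have hε'0 : 0 < ε' := div_pos hε hD0
        set m : ℝ := Finset.univ.inf' Finset.univ_nonempty
          (fun i => if zz a i = 0 then ε' else |zz a i|) with hmdef
        have hm0 : 0 < m := by
          rw [hmdef, Finset.lt_inf'_iff]
          intro i _
          by_cases hzi : zz a i = 0 <;> simp [hzi, hε'0, abs_pos]
        have hmle : ∀ i, m ≤ if zz a i = 0 then ε' else |zz a i| :=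
          fun i => Finset.inf'_le _ (Finset.mem_univ i)
        obtain ⟨δ₀, hδ₀, hδball⟩ := Metric.continuousWithinAt_iff.1 (hzc a ha0) m hm0
        refine ⟨δ₀ / 2, by positivity, ?_⟩
        intro u hau huδ hub
        have hu0 : 0 ≤ u := le_trans ha0 hau
        have hnear : ∀ τ ∈ Set.Icc a u, ∀ i, |zz τ i - zz a i| < m := by
          intro τ hτ i
          have h1 : dist (zz τ) (zz a) < m := by
            apply hδball
            · exact le_trans ha0 hτ.1
            · rw [Real.dist_eq, abs_of_nonneg (by linarith [hτ.1] : (0:ℝ) ≤ τ - a)]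
              have := hτ.2
              linarith
          calc |zz τ i - zz a i| = dist (zz τ i) (zz a i) := (Real.dist_eq _ _).symm
            _ ≤ dist (zz τ) (zz a) := dist_le_pi_dist _ _ i
            _ < m := h1
        -- choice of signs
        set σ : Fin n → ℝ := fun i => if 0 < zz a i then 1 else if zz a i < 0 then -1
          else if 0 ≤ zz u i then 1 else -1 with hσdef
        have hσpm : ∀ i, σ i = 1 ∨ σ i = -1 := by
          intro i
          simp only [hσdef]
          split_ifs <;> simp
        have habs1 : ∀ (q x : ℝ), (q = 1 ∨ q = -1) → q * x ≤ |x| := by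
          rintro q x (rfl | rfl)
          · rw [one_mul]; exact le_abs_self x
          · rw [neg_one_mul]; exact neg_le_abs x
        have hσa : ∀ i, σ i * zz a i = |zz a i| := by
          intro i
          simp only [hσdef]
          rcases lt_trichotomy (zz a i) 0 with hlt | heq | hgt
          · rw [if_neg (by linarith), if_pos hlt, abs_of_neg hlt]; ring
          · simp [heq]
          · rw [if_pos hgt, abs_of_pos hgt, one_mul]
        have hmlei : ∀ i, zz a i ≠ 0 → m ≤ |zz a i| := by
          intro i hzi
          have := hmle i
          rwa [if_neg hzi] at this
        have hsgn : ∀ τ ∈ Set.Icc a u, ∀ i, zz a i ≠ 0 → σ i * zz τ i = |zz τ i| := by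
          intro τ hτ i hzi
          have h1 := hnear τ hτ i
          have h1' := abs_lt.1 h1
          have h2 := hmlei i hzi
          rcases lt_or_gt_of_ne hzi with hlt | hgt
          · have h3 : zz τ i < 0 := by
              rw [abs_of_neg hlt] at h2
              linarith [h1'.2]
            simp only [hσdef]
            rw [if_neg (by linarith), if_pos hlt, abs_of_neg h3]; ring
          · have h3 : 0 < zz τ i := by
              rw [abs_of_pos hgt] at h2
              linarith [h1'.1]
            simp only [hσdef]
            rw [if_pos hgt, abs_of_pos h3, one_mul]
        have hσu : ∀ i, σ i * zz u i = |zz u i| := by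
          intro i
          by_cases hzi : zz a i = 0
          · simp only [hσdef]
            rw [if_neg (by rw [hzi]; exact lt_irrefl 0), if_neg (by rw [hzi]; exact lt_irrefl 0)]
            by_cases h4 : 0 ≤ zz u i
            · rw [if_pos h4, abs_of_nonneg h4, one_mul]
            · rw [if_neg h4, abs_of_neg (lt_of_not_ge h4)]; ring
          · exact hsgn u ⟨hau, le_refl u⟩ i hzi
        have hpen : ∀ τ ∈ Set.Icc a u, ∀ i, |zz τ i| - σ i * zz τ i ≤ 2 * ε' := by
          intro τ hτ i
          by_cases hzi : zz a i = 0
          · have h1 : |zz τ i| < ε' := by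
              have h2 := hnear τ hτ i
              rw [hzi, sub_zero] at h2
              have h3 := hmle i
              rw [if_pos hzi] at h3
              linarith
            have h3 : -|zz τ i| ≤ σ i * zz τ i := by
              rcases hσpm i with hq | hq <;> rw [hq]
              · rw [one_mul]; exact neg_abs_le _
              · rw [neg_one_mul]; exact neg_le_neg (le_abs_self _) |>.trans_eq rfl |>.trans
                  (le_refl _) |>.trans_eq rfl
            linarith
          · rw [hsgn τ hτ i hzi]
            simp
            linarith
        -- the componentwise integral identity
        have hcomp : ∀ i, p i * |zz u i| - p i * |zz a i| =
            ∫ τ in a..u, p i * (σ i * hh τ i) := by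
          intro i
          have he := hzeqi a u ha0 hau i
          have h5 : |zz u i| - |zz a i| = σ i * (zz u i - zz a i) := by
            rw [mul_sub, hσu i, hσa i]
          calc p i * |zz u i| - p i * |zz a i|
              = p i * (σ i * (zz u i - zz a i)) := by rw [← h5]; ring
            _ = p i * (σ i * ∫ τ in a..u, hh τ i) := by rw [he]
            _ = ∫ τ in a..u, p i * (σ i * hh τ i) := by
                rw [intervalIntegral.integral_const_mul, intervalIntegral.integral_const_mul]
        have hVdiff : Vv u - Vv a = ∫ τ in a..u, (∑ i, p i * (σ i * hh τ i)) := by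
          rw [intervalIntegral.integral_finset_sum
            (fun i _ => ((hhiII a u ha0 hau i).const_mul (σ i)).const_mul (p i))]
          simp only [hVdef]
          rw [← Finset.sum_sub_distrib]
          exact Finset.sum_congr rfl fun i _ => hcomp i
        -- pointwise estimate
        have hkey : ∀ τ ∈ Set.Icc a u, (∑ i, p i * (σ i * hh τ i)) ≤ -ξ * Vv τ + gg τ + ε := by
          intro τ hτ
          have hper : ∀ i, σ i * hh τ i ≤ (A + B₁ * Δ * C₁).mulVec (fun j => |zz τ j|) i
              + (∑ j, B₂ i j * |dw τ j|) + 2 * |A i i| * ε' := by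
            intro i
            have t1 : σ i * A.mulVec (zz τ) i ≤
                A.mulVec (fun j => |zz τ j|) i + 2 * |A i i| * ε' := by
              simp only [Matrix.mulVec, dotProduct, Finset.mul_sum]
              have hsplit : ∀ j, σ i * (A i j * zz τ j) ≤
                  A i j * |zz τ j| + (if j = i then 2 * |A i i| * ε' else 0) := by
                intro j
                by_cases hji : j = i
                · subst hji
                  rw [if_pos rfl]
                  have q0 : 0 ≤ |zz τ j| - σ j * zz τ j := by
                    have := habs1 (σ j) (zz τ j) (hσpm j); linarith
                  have q1 : |zz τ j| - σ j * zz τ j ≤ 2 * ε' := hpen τ hτ j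
                  have q2 : -(A j j) * (|zz τ j| - σ j * zz τ j) ≤ |A j j| * (2 * ε') := by
                    apply mul_le_mul (neg_le_abs _) q1 q0 (abs_nonneg _)
                  nlinarith [q2]
                · rw [if_neg hji]
                  have h6 : σ i * zz τ j ≤ |zz τ j| := habs1 _ _ (hσpm i)
                  have hAij : 0 ≤ A i j := hA i j (fun h' => hji h'.symm)
                  calc σ i * (A i j * zz τ j) = A i j * (σ i * zz τ j) := by ring
                    _ ≤ A i j * |zz τ j| := mul_le_mul_of_nonneg_left h6 hAij
                    _ = A i j * |zz τ j| + 0 := (add_zero _).symm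
              calc ∑ j, σ i * (A i j * zz τ j)
                  ≤ ∑ j, (A i j * |zz τ j| + (if j = i then 2 * |A i i| * ε' else 0)) :=
                    Finset.sum_le_sum fun j _ => hsplit j
                _ = (∑ j, A i j * |zz τ j|) + 2 * |A i i| * ε' := by
                    rw [Finset.sum_add_distrib]
                    simp [Finset.sum_ite_eq' Finset.univ i]
            have hdfb : ∀ jj, |df τ jj| ≤ (Δ * C₁).mulVec (fun k => |zz τ k|) jj := by
              intro jj
              have h1 := hf_inc (C₁.mulVec (x_a τ)) (C₁.mulVec (x_b τ)) jj
              have h2 : (fun k => |C₁.mulVec (x_a τ) k - C₁.mulVec (x_b τ) k|)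
                  = fun k => |C₁.mulVec (zz τ) k| := by
                funext k
                rw [hzzdef]
                simp only [Matrix.mulVec_sub, Pi.sub_apply]
              rw [h2] at h1
              have h3 : df τ jj = f (C₁.mulVec (x_a τ)) jj - f (C₁.mulVec (x_b τ)) jj := by
                rw [hdfdef]; simp
              rw [h3]
              refine le_trans h1 ?_
              calc Δ.mulVec (fun k => |C₁.mulVec (zz τ) k|) jj
                  ≤ Δ.mulVec (C₁.mulVec (fun l => |zz τ l|)) jj :=
                    mulVec_mono Δ hΔ (fun k => mulVec_abs_le C₁ hC₁ (zz τ) k) jj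
                _ = (Δ * C₁).mulVec (fun l => |zz τ l|) jj := by rw [Matrix.mulVec_mulVec]
            have t2 : σ i * B₁.mulVec (df τ) i ≤
                (B₁ * Δ * C₁).mulVec (fun j => |zz τ j|) i := by
              calc σ i * B₁.mulVec (df τ) i ≤ |B₁.mulVec (df τ) i| := habs1 _ _ (hσpm i)
                _ ≤ B₁.mulVec (fun j => |df τ j|) i := mulVec_abs_le B₁ hB₁ _ i
                _ ≤ B₁.mulVec ((Δ * C₁).mulVec (fun k => |zz τ k|)) i :=
                    mulVec_mono B₁ hB₁ hdfb i
                _ = (B₁ * (Δ * C₁)).mulVec (fun k => |zz τ k|) i := by rw [Matrix.mulVec_mulVec]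
                _ = (B₁ * Δ * C₁).mulVec (fun k => |zz τ k|) i := by rw [Matrix.mul_assoc]
            have t3 : σ i * B₂.mulVec (dw τ) i ≤ ∑ j, B₂ i j * |dw τ j| := by
              calc σ i * B₂.mulVec (dw τ) i ≤ |B₂.mulVec (dw τ) i| := habs1 _ _ (hσpm i)
                _ ≤ B₂.mulVec (fun j => |dw τ j|) i := mulVec_abs_le B₂ hB₂ _ i
                _ = ∑ j, B₂ i j * |dw τ j| := by simp [Matrix.mulVec, dotProduct]
            have hcomb : σ i * hh τ i = σ i * A.mulVec (zz τ) i + σ i * B₁.mulVec (df τ) i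
                + σ i * B₂.mulVec (dw τ) i := by
              rw [hhhdef]
              simp only [Pi.add_apply]
              ring
            have hAM : (A + B₁ * Δ * C₁).mulVec (fun j => |zz τ j|) i =
                A.mulVec (fun j => |zz τ j|) i + (B₁ * Δ * C₁).mulVec (fun j => |zz τ j|) i := by
              rw [Matrix.add_mulVec]; simp
            rw [hcomb, hAM]
            linarith [t1, t2, t3]
          have hsum1 : (∑ i, p i * (σ i * hh τ i)) ≤
              ∑ i, (p i * ((A + B₁ * Δ * C₁).mulVec (fun j => |zz τ j|) i)
                + p i * (∑ j, B₂ i j * |dw τ j|) + p i * (2 * |A i i| * ε')) := by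
            refine Finset.sum_le_sum fun i _ => ?_
            have e := mul_le_mul_of_nonneg_left (hper i) (hp i).le
            rw [mul_add, mul_add] at e
            exact e
          have hH1' : (∑ i, p i * ((A + B₁ * Δ * C₁).mulVec (fun j => |zz τ j|) i))
              ≤ -ξ * Vv τ := by
            have e1 : (∑ i, p i * ((A + B₁ * Δ * C₁).mulVec (fun j => |zz τ j|) i))
                = ∑ j, (vecMul p (A + B₁ * Δ * C₁)) j * |zz τ j| := by
              simp only [Matrix.mulVec, Matrix.vecMul, dotProduct, Finset.mul_sum,
                Finset.sum_mul]
              rw [Finset.sum_comm]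
              exact Finset.sum_congr rfl fun j _ => Finset.sum_congr rfl fun i _ => by ring
            rw [e1]
            calc ∑ j, (vecMul p (A + B₁ * Δ * C₁)) j * |zz τ j|
                ≤ ∑ j, -(ξ * p j) * |zz τ j| := Finset.sum_le_sum fun j _ =>
                  mul_le_mul_of_nonneg_right (hH1 j) (abs_nonneg _)
              _ = -ξ * Vv τ := by
                  simp only [hVdef]
                  rw [Finset.mul_sum]
                  exact Finset.sum_congr rfl fun j _ => by ring
          have hZ : (∑ i, p i * (2 * |A i i| * ε')) ≤ ε := by
            have e3 : (∑ i, p i * (2 * |A i i| * ε')) = (∑ i, p i * (2 * |A i i|)) * ε' := by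
              rw [Finset.sum_mul]
              exact Finset.sum_congr rfl fun i _ => by ring
            have e4 : (∑ i, p i * (2 * |A i i|)) = D - 1 := by rw [hDdef]; ring
            rw [e3, e4, hε'def]
            calc (D - 1) * (ε / D) ≤ D * (ε / D) :=
                mul_le_mul_of_nonneg_right (by linarith) (by positivity)
              _ = ε := by field_simp
          have hY : (∑ i, p i * (∑ j, B₂ i j * |dw τ j|)) = gg τ := by
            simp only [hgdef]
            exact Finset.sum_congr rfl fun i _ => by
              rw [Finset.mul_sum]
              exact Finset.sum_congr rfl fun j _ => by ring
          calc (∑ i, p i * (σ i * hh τ i))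
              ≤ ∑ i, (p i * ((A + B₁ * Δ * C₁).mulVec (fun j => |zz τ j|) i)
                + p i * (∑ j, B₂ i j * |dw τ j|) + p i * (2 * |A i i| * ε')) := hsum1
            _ = (∑ i, p i * ((A + B₁ * Δ * C₁).mulVec (fun j => |zz τ j|) i))
                + (∑ i, p i * (∑ j, B₂ i j * |dw τ j|))
                + (∑ i, p i * (2 * |A i i| * ε')) := by
                rw [Finset.sum_add_distrib, Finset.sum_add_distrib]
            _ ≤ -ξ * Vv τ + gg τ + ε :=
                add_le_add (add_le_add hH1' (le_of_eq hY)) hZ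
        -- integrate the estimate
        have hSII : IntervalIntegrable (fun τ => ∑ i, p i * (σ i * hh τ i)) volume a u := by
          constructor
          · apply integrable_finset_sum
            intro i _
            exact (((hhiII a u ha0 hau i).const_mul (σ i)).const_mul (p i)).1
          · apply integrable_finset_sum
            intro i _
            exact (((hhiII a u ha0 hau i).const_mul (σ i)).const_mul (p i)).2
        have hRHSII : IntervalIntegrable (fun τ => -ξ * Vv τ + gg τ + ε) volume a u :=
          (hψII a u ha0 hau).add intervalIntegrable_const
        have hbound : Vv u - Vv a ≤ ∫ τ in a..u, (-ξ * Vv τ + gg τ + ε) := by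
          rw [hVdiff]
          exact intervalIntegral.integral_mono_on hau hSII hRHSII hkey
        have hIsplit : (∫ τ in a..u, (-ξ * Vv τ + gg τ + ε))
            = (∫ τ in a..u, (-ξ * Vv τ + gg τ)) + ε * (u - a) := by
          rw [intervalIntegral.integral_add (hψII a u ha0 hau) intervalIntegrable_const,
            intervalIntegral.integral_const, smul_eq_mul]
          ring
        have hIdiff : (∫ τ in t₁..u, (-ξ * Vv τ + gg τ)) - (∫ τ in t₁..a, (-ξ * Vv τ + gg τ))
            = ∫ τ in a..u, (-ξ * Vv τ + gg τ) :=
          intervalIntegral.integral_interval_sub_left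
            (hψII t₁ u h10 (ha1.trans hau)) (hψII t₁ a h10 ha1)
        simp only [hφdef]
        have hεua : ε * (u - a) = ε * u - ε * a := by ring
        linarith [hbound, hIsplit, hIdiff]
    -- unpack hmain
    have h0 : (∫ τ in t₁..t₁, (-ξ * Vv τ + gg τ)) = 0 := intervalIntegral.integral_same
    have hm2 : (Vv t₂ - ∫ τ in t₁..t₂, (-ξ * Vv τ + gg τ)) - ε * t₂ ≤
        (Vv t₁ - ∫ τ in t₁..t₁, (-ξ * Vv τ + gg τ)) - ε * t₁ := hmain
    rw [h0] at hm2
    have hne' : t₂ - t₁ ≠ 0 := by linarith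
    have hsplit : ε * t₂ - ε * t₁ = η := by
      rw [hεdef]; field_simp
    linarith
  -- consequence: growth bounded by the disturbance integral
  have hRg : ∀ t₁ t₂ : ℝ, 0 ≤ t₁ → t₁ ≤ t₂ → Vv t₂ ≤ Vv t₁ + ∫ τ in t₁..t₂, gg τ := by
    intro t₁ t₂ h10 h12
    have h1 := hR t₁ t₂ h10 h12
    have h2 : (∫ τ in t₁..t₂, (-ξ * Vv τ + gg τ)) ≤ ∫ τ in t₁..t₂, gg τ := by
      apply intervalIntegral.integral_mono_on h12 (hψII t₁ t₂ h10 h12) (hggII t₁ t₂ h10 h12)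
      intro x _
      have h3 : 0 ≤ ξ * Vv x := mul_nonneg hξ.le (hVnn x)
      linarith
    linarith
  -- constants
  set cB : ℝ := ∑ i, ∑ j, p i * B₂ i j with hcBdef
  have hcB0 : 0 ≤ cB := Finset.sum_nonneg fun i _ =>
    Finset.sum_nonneg fun j _ => mul_nonneg (hp i).le (hB₂ i j)
  set Ks : ℝ := ∫ t in Set.Ici (0:ℝ), ‖Real.exp (γ * t) • (w_a t - w_b t)‖ ^ s with hKsdef
  have hKs0 : 0 ≤ Ks := by
    rw [hKsdef]
    exact integral_nonneg fun t => Real.rpow_nonneg (norm_nonneg _) s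
  set KK : ℝ := cB * (1 + Ks) with hKKdef
  have hKK0 : 0 ≤ KK := mul_nonneg hcB0 (by linarith)
  -- bound on the unit-interval disturbance integrals
  have hGbound : ∀ k : ℕ, (∫ τ in (k:ℝ)..((k:ℝ)+1), gg τ) ≤ KK * Real.exp (-γ) ^ k := by
    intro k
    have hk0 : (0:ℝ) ≤ (k:ℝ) := Nat.cast_nonneg k
    have hkk : (k:ℝ) ≤ (k:ℝ) + 1 := by linarith
    have huuint : IntegrableOn (fun t => ‖Real.exp (γ * t) • (w_a t - w_b t)‖ ^ s)
        (Set.Icc (k:ℝ) ((k:ℝ)+1)) volume := hLs.mono_set (hIccIci _ _ hk0)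
    have huuII : IntervalIntegrable (fun t => ‖Real.exp (γ * t) • (w_a t - w_b t)‖ ^ s)
        volume (k:ℝ) ((k:ℝ)+1) := by
      rw [intervalIntegrable_iff_integrableOn_Ioc_of_le hkk]
      exact huuint.mono_set Set.Ioc_subset_Icc_self
    have hRHSII : IntervalIntegrable
        (fun τ => cB * (Real.exp (-γ * (k:ℝ)) * (1 + ‖Real.exp (γ * τ) • (w_a τ - w_b τ)‖ ^ s)))
        volume (k:ℝ) ((k:ℝ)+1) :=
      ((intervalIntegrable_const.add huuII).const_mul _).const_mul _
    have hmono : (∫ τ in (k:ℝ)..((k:ℝ)+1), gg τ) ≤ ∫ τ in (k:ℝ)..((k:ℝ)+1),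
        cB * (Real.exp (-γ * (k:ℝ)) * (1 + ‖Real.exp (γ * τ) • (w_a τ - w_b τ)‖ ^ s)) := by
      apply intervalIntegral.integral_mono_on hkk (hggII _ _ hk0 hkk) hRHSII
      intro τ hτ
      have h1 : gg τ ≤ cB * ‖dw τ‖ := by
        simp only [hgdef, hcBdef]
        rw [Finset.sum_mul]
        refine Finset.sum_le_sum fun i _ => ?_
        rw [Finset.sum_mul]
        refine Finset.sum_le_sum fun j _ => ?_
        refine mul_le_mul_of_nonneg_left ?_ (mul_nonneg (hp i).le (hB₂ i j))
        calc |dw τ j| = ‖dw τ j‖ := (Real.norm_eq_abs _).symm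
          _ ≤ ‖dw τ‖ := norm_le_pi_norm (dw τ) j
      have h2 : ‖dw τ‖ ≤ Real.exp (-γ * (k:ℝ)) *
          (1 + ‖Real.exp (γ * τ) • (w_a τ - w_b τ)‖ ^ s) := by
        have e1 : ‖Real.exp (γ * τ) • (w_a τ - w_b τ)‖ = Real.exp (γ * τ) * ‖dw τ‖ := by
          rw [norm_smul, Real.norm_eq_abs, abs_of_pos (Real.exp_pos _)]
        rw [e1]
        set q : ℝ := Real.exp (γ * τ) * ‖dw τ‖ with hqdef
        have hq0 : 0 ≤ q := mul_nonneg (Real.exp_pos _).le (norm_nonneg _)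
        have hq : q ≤ 1 + q ^ s := by
          rcases le_or_gt q 1 with hc | hc
          · have : (0:ℝ) ≤ q ^ s := Real.rpow_nonneg hq0 s
            linarith
          · have h5 : q ^ (1:ℝ) ≤ q ^ s := Real.rpow_le_rpow_of_exponent_le hc.le hs
            rw [Real.rpow_one] at h5
            linarith
        have e2 : ‖dw τ‖ = Real.exp (-(γ * τ)) * q := by
          rw [hqdef, ← mul_assoc, ← Real.exp_add]
          simp
        have e3 : Real.exp (-(γ * τ)) ≤ Real.exp (-γ * (k:ℝ)) := by
          apply Real.exp_le_exp.2
          have := hτ.1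
          nlinarith [hγ.le]
        calc ‖dw τ‖ = Real.exp (-(γ * τ)) * q := e2
          _ ≤ Real.exp (-γ * (k:ℝ)) * q := mul_le_mul_of_nonneg_right e3 hq0
          _ ≤ Real.exp (-γ * (k:ℝ)) * (1 + q ^ s) :=
              mul_le_mul_of_nonneg_left hq (Real.exp_pos _).le
      calc gg τ ≤ cB * ‖dw τ‖ := h1
        _ ≤ cB * (Real.exp (-γ * (k:ℝ)) * (1 + ‖Real.exp (γ * τ) • (w_a τ - w_b τ)‖ ^ s)) :=
            mul_le_mul_of_nonneg_left h2 hcB0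
    have hval : (∫ τ in (k:ℝ)..((k:ℝ)+1),
        cB * (Real.exp (-γ * (k:ℝ)) * (1 + ‖Real.exp (γ * τ) • (w_a τ - w_b τ)‖ ^ s)))
        ≤ KK * Real.exp (-γ) ^ k := by
      rw [intervalIntegral.integral_const_mul, intervalIntegral.integral_const_mul]
      have h6 : (∫ τ in (k:ℝ)..((k:ℝ)+1),
          (1 + ‖Real.exp (γ * τ) • (w_a τ - w_b τ)‖ ^ s)) ≤ 1 + Ks := by
        rw [intervalIntegral.integral_add intervalIntegrable_const huuII,
          intervalIntegral.integral_const]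
        have h7 : (∫ τ in (k:ℝ)..((k:ℝ)+1), ‖Real.exp (γ * τ) • (w_a τ - w_b τ)‖ ^ s) ≤ Ks := by
          rw [intervalIntegral.integral_of_le hkk, hKsdef]
          apply setIntegral_mono_set hLs
          · exact Filter.Eventually.of_forall fun t => Real.rpow_nonneg (norm_nonneg _) s
          · exact (hIocIci _ _ hk0).eventuallyLE
        simp only [smul_eq_mul]
        have he : ((k:ℝ) + 1 - k) * 1 = 1 := by ring
        rw [he]
        linarith
      have h8 : (0:ℝ) ≤ Real.exp (-γ * (k:ℝ)) := (Real.exp_pos _).le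
      have h9 : Real.exp (-γ * (k:ℝ)) = Real.exp (-γ) ^ k := by
        rw [show -γ * (k:ℝ) = (k:ℝ) * (-γ) by ring, Real.exp_nat_mul]
      calc cB * (Real.exp (-γ * (k:ℝ)) * ∫ τ in (k:ℝ)..((k:ℝ)+1),
            (1 + ‖Real.exp (γ * τ) • (w_a τ - w_b τ)‖ ^ s))
          ≤ cB * (Real.exp (-γ * (k:ℝ)) * (1 + Ks)) := by
            apply mul_le_mul_of_nonneg_left (mul_le_mul_of_nonneg_left h6 h8) hcB0
        _ = KK * Real.exp (-γ) ^ k := by rw [hKKdef, h9]; ring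
    exact le_trans hmono hval
  -- one-step contraction
  have hstep : ∀ k : ℕ, Vv ((k:ℝ)+1) ≤ (1+ξ)⁻¹ * Vv (k:ℝ) + KK * Real.exp (-γ) ^ k := by
    intro k
    have hk0 : (0:ℝ) ≤ (k:ℝ) := Nat.cast_nonneg k
    have hkk : (k:ℝ) ≤ (k:ℝ) + 1 := by linarith
    set G : ℝ := ∫ τ in (k:ℝ)..((k:ℝ)+1), gg τ with hGdef
    have hGnn : 0 ≤ G := by
      rw [hGdef]
      exact intervalIntegral.integral_nonneg hkk fun τ _ => hggnn τ
    have hlow : ∀ τ ∈ Set.Icc (k:ℝ) ((k:ℝ)+1), Vv ((k:ℝ)+1) - G ≤ Vv τ := by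
      intro τ hτ
      have h1 := hRg τ ((k:ℝ)+1) (le_trans hk0 hτ.1) hτ.2
      have h2 : (∫ r in τ..((k:ℝ)+1), gg r) ≤ G := by
        rw [hGdef]
        apply intervalIntegral.integral_mono_interval hτ.1 hτ.2 le_rfl
          (Filter.Eventually.of_forall fun r => hggnn r) (hggII _ _ hk0 hkk)
      linarith
    have hIV : Vv ((k:ℝ)+1) - G ≤ ∫ τ in (k:ℝ)..((k:ℝ)+1), Vv τ := by
      have h3 := intervalIntegral.integral_mono_on hkk
        (intervalIntegrable_const (c := Vv ((k:ℝ)+1) - G)) (hVII _ _ hk0 hkk) hlow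
      rw [intervalIntegral.integral_const, smul_eq_mul] at h3
      have he : ((k:ℝ) + 1 - k) * (Vv ((k:ℝ)+1) - G) = Vv ((k:ℝ)+1) - G := by ring
      rwa [he] at h3
    have h4 := hR (k:ℝ) ((k:ℝ)+1) hk0 hkk
    have h5 : (∫ τ in (k:ℝ)..((k:ℝ)+1), (-ξ * Vv τ + gg τ))
        = -ξ * (∫ τ in (k:ℝ)..((k:ℝ)+1), Vv τ) + G := by
      rw [intervalIntegral.integral_add ((hVII _ _ hk0 hkk).const_mul (-ξ)) (hggII _ _ hk0 hkk),
        intervalIntegral.integral_const_mul, hGdef]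
    have h6 : ξ * (Vv ((k:ℝ)+1) - G) ≤ ξ * ∫ τ in (k:ℝ)..((k:ℝ)+1), Vv τ :=
      mul_le_mul_of_nonneg_left hIV hξ.le
    have h7 : (1+ξ) * Vv ((k:ℝ)+1) ≤ Vv (k:ℝ) + (1+ξ) * G := by nlinarith
    have h8 : (0:ℝ) < 1 + ξ := by linarith
    have h12 := mul_le_mul_of_nonneg_left h7 (inv_nonneg.2 h8.le)
    rw [inv_mul_cancel_left₀ (ne_of_gt h8), mul_add, inv_mul_cancel_left₀ (ne_of_gt h8)] at h12
    have h11 := hGbound k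
    rw [← hGdef] at h11
    linarith
  -- geometric decay along integers
  set θ : ℝ := (1+ξ)⁻¹ with hθdef
  have hθ0 : 0 < θ := inv_pos.2 (by linarith)
  have hθ1 : θ < 1 := by
    rw [hθdef, inv_lt_one_iff₀]
    right; linarith
  set ρ : ℝ := max θ (Real.exp (-γ)) with hρdef
  have hρ0 : 0 < ρ := lt_of_lt_of_le hθ0 (le_max_left _ _)
  have hρ1 : ρ < 1 := max_lt hθ1 (Real.exp_lt_one_iff.2 (by linarith))
  set r : ℝ := (1 + ρ)/2 with hrdef
  have hr0 : 0 < r := by rw [hrdef]; linarith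
  have hr1 : r < 1 := by rw [hrdef]; linarith
  have hρr : ρ < r := by rw [hrdef]; linarith
  have hθr : θ < r := lt_of_le_of_lt (le_max_left _ _) hρr
  set CC : ℝ := max (Vv 0) (KK / (r - θ)) with hCCdef
  have hCC0 : 0 ≤ CC := le_trans (hVnn 0) (le_max_left _ _)
  have hKC : KK ≤ (r - θ) * CC := by
    have h1 : KK / (r - θ) ≤ CC := le_max_right _ _
    have hne2 : r - θ ≠ 0 := ne_of_gt (by linarith)
    have h2 : KK / (r - θ) * (r - θ) ≤ CC * (r - θ) :=
      mul_le_mul_of_nonneg_right h1 (by linarith)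
    rw [div_mul_cancel₀ KK hne2] at h2
    have h3 : CC * (r - θ) = (r - θ) * CC := mul_comm _ _
    linarith
  have hind : ∀ k : ℕ, Vv (k:ℝ) ≤ CC * r ^ k := by
    intro k
    induction k with
    | zero =>
      rw [Nat.cast_zero, pow_zero, mul_one, hCCdef]
      exact le_max_left _ _
    | succ k ih =>
      have h1 := hstep k
      have h2 : Real.exp (-γ) ^ k ≤ ρ ^ k :=
        pow_le_pow_left₀ (Real.exp_pos _).le (le_max_right _ _) k
      have h3 : ρ ^ k ≤ r ^ k := pow_le_pow_left₀ hρ0.le hρr.le k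
      have hcast : ((k+1 : ℕ):ℝ) = (k:ℝ) + 1 := by push_cast; ring
      rw [hcast]
      have h4 : KK * Real.exp (-γ) ^ k ≤ ((r - θ) * CC) * r ^ k :=
        mul_le_mul hKC (le_trans h2 h3) (pow_nonneg (Real.exp_pos _).le k)
          (mul_nonneg (by linarith) hCC0)
      calc Vv ((k:ℝ)+1) ≤ θ * Vv (k:ℝ) + KK * Real.exp (-γ) ^ k := h1
        _ ≤ θ * (CC * r ^ k) + ((r - θ) * CC) * r ^ k :=
            add_le_add (mul_le_mul_of_nonneg_left ih hθ0.le) h4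
        _ = CC * r ^ (k+1) := by ring
  -- conclusion
  set pmin : ℝ := Finset.univ.inf' Finset.univ_nonempty p with hpmindef
  have hpmin0 : 0 < pmin := by
    rw [hpmindef, Finset.lt_inf'_iff]
    exact fun i _ => hp i
  have hpminle : ∀ i, pmin ≤ p i := fun i => Finset.inf'_le _ (Finset.mem_univ i)
  set β : ℝ := -Real.log r with hβdef
  have hβ0 : 0 < β := by
    rw [hβdef]
    linarith [Real.log_neg hr0 hr1]
  refine ⟨(CC + KK) * r⁻¹ / pmin, by positivity, β, hβ0, ?_⟩
  intro t ht
  set k : ℕ := ⌊t⌋₊ with hkdef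
  have hk1 : (k:ℝ) ≤ t := Nat.floor_le ht
  have hk2 : t < (k:ℝ) + 1 := Nat.lt_floor_add_one t
  have hVt : Vv t ≤ (CC + KK) * r ^ k := by
    have h1 := hRg (k:ℝ) t (Nat.cast_nonneg k) hk1
    have h2 : (∫ τ in (k:ℝ)..t, gg τ) ≤ ∫ τ in (k:ℝ)..((k:ℝ)+1), gg τ :=
      intervalIntegral.integral_mono_interval le_rfl hk1 hk2.le
        (Filter.Eventually.of_forall fun x => hggnn x)
        (hggII _ _ (Nat.cast_nonneg k) (by linarith))
    have h3 := hGbound k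
    have h4 := hind k
    have h5 : KK * Real.exp (-γ) ^ k ≤ KK * r ^ k := by
      apply mul_le_mul_of_nonneg_left ?_ hKK0
      calc Real.exp (-γ) ^ k ≤ ρ ^ k :=
          pow_le_pow_left₀ (Real.exp_pos _).le (le_max_right _ _) k
        _ ≤ r ^ k := pow_le_pow_left₀ hρ0.le hρr.le k
    have h6 : (CC + KK) * r ^ k = CC * r ^ k + KK * r ^ k := by ring
    linarith
  have hrk : r ^ k ≤ r⁻¹ * Real.exp (-β * t) := by
    have h1 : r ^ k = Real.exp (Real.log r * k) := by
      rw [mul_comm, Real.exp_nat_mul, Real.exp_log hr0]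
    have hlr : Real.log r < 0 := Real.log_neg hr0 hr1
    have h2 : Real.log r * k ≤ Real.log r * (t - 1) := by
      apply mul_le_mul_of_nonpos_left ?_ hlr.le
      linarith
    have h3 : Real.exp (Real.log r * (t-1)) = r⁻¹ * Real.exp (-β * t) := by
      rw [mul_sub, mul_one, Real.exp_sub, Real.exp_log hr0, hβdef]
      rw [div_eq_inv_mul]
      congr 2
      ring
    calc r ^ k = Real.exp (Real.log r * k) := h1
      _ ≤ Real.exp (Real.log r * (t-1)) := Real.exp_le_exp.2 h2
      _ = r⁻¹ * Real.exp (-β * t) := h3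
  have hzn : ‖x_a t - x_b t‖ ≤ Vv t / pmin := by
    rw [pi_norm_le_iff_of_nonneg (div_nonneg (hVnn t) hpmin0.le)]
    intro i
    rw [Real.norm_eq_abs, le_div_iff₀ hpmin0]
    have e0 : (x_a t - x_b t) i = zz t i := rfl
    rw [e0]
    calc |zz t i| * pmin ≤ |zz t i| * p i :=
        mul_le_mul_of_nonneg_left (hpminle i) (abs_nonneg _)
      _ = p i * |zz t i| := mul_comm _ _
      _ ≤ Vv t := Finset.single_le_sum (f := fun j => p j * |zz t j|)
          (fun j _ => mul_nonneg (hp j).le (abs_nonneg _)) (Finset.mem_univ i)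
  have hfinal : Vv t ≤ (CC + KK) * (r⁻¹ * Real.exp (-β * t)) := by
    calc Vv t ≤ (CC + KK) * r ^ k := hVt
      _ ≤ (CC + KK) * (r⁻¹ * Real.exp (-β * t)) :=
          mul_le_mul_of_nonneg_left hrk (by positivity)
  calc ‖x_a t - x_b t‖ ≤ Vv t / pmin := hzn
    _ ≤ ((CC + KK) * (r⁻¹ * Real.exp (-β * t))) / pmin := by
        exact div_le_div_of_nonneg_right hfinal hpmin0.le
    _ = (CC + KK) * r⁻¹ / pmin * Real.exp (-β * t) := by ring
end
end

section
/- Let A ∈ ℝ^{n×n} be Metzler and Hurwitz, and let B₁ ∈ ℝ^{n×m₁} and C₁ ∈ ℝ^{p₁×n} be entrywise nonnegative. Then for every λ ∈ ℂ with Re λ ≥ 0, the matrix λI − A is invertible and the entrywise modulus of G₁₁(λ) := C₁(λI − A)^{-1}B₁ satisfies |G₁₁(λ)| ≤ G₁₁(0) entrywise, where G₁₁(0) := C₁(−A)^{-1}B₁. Consequently, for every entrywise nonnegative Δ ∈ ℝ^{m₁×p₁} and every λ with Re λ ≥ 0, the spectral radius satisfies ρ(G₁₁(λ)Δ) ≤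 ρ(G₁₁(0)Δ). -/
open Matrix

noncomputable section

/-- A square real matrix is Hurwitz if every (complex) eigenvalue has negative real part. -/
def IsHurwitz {n : ℕ} (A : Matrix (Fin n) (Fin n) ℝ) : Prop :=
  ∀ μ ∈ spectrum ℂ (A.map (fun a => (a : ℂ))), μ.re < 0

section AuxSection

open Filter
open scoped ENNReal NNReal Topology

attribute [local instance] Matrix.linftyOpNormedAddCommGroup Matrix.linftyOpNormedRing Matrix.linftyOpNormedAlgebra


namespace Stmt19Aux

/-- nnnorm is monotone w.r.t. entrywise norm domination (linfty op norm). -/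
theorem nnnorm_mono {q q' : ℕ} {M P : Matrix (Fin q) (Fin q') ℂ}
    (h : ∀ i j, ‖M i j‖ ≤ ‖P i j‖) : ‖M‖ ≤ ‖P‖ := by
  rw [Matrix.linfty_opNorm_def, Matrix.linfty_opNorm_def]
  norm_cast
  apply Finset.sup_mono_fun
  intro i _
  exact Finset.sum_le_sum fun j _ => by exact_mod_cast h i j

theorem map_pow_comm {q : ℕ} (P : Matrix (Fin q) (Fin q) ℝ) (k : ℕ) :
    (P.map (fun a => (a:ℂ))) ^ k = (P ^ k).map (fun a => (a:ℂ)) := by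
  have h : ∀ Q : Matrix (Fin q) (Fin q) ℝ, Q.map (fun a => (a:ℂ)) =
      (algebraMap ℝ ℂ).mapMatrix Q := by
    intro Q; rfl
  rw [h, h, ← map_pow]

/-- entrywise bound on powers -/
theorem pow_entry_le {q : ℕ} {M : Matrix (Fin q) (Fin q) ℂ} {P : Matrix (Fin q) (Fin q) ℝ}
    (h : ∀ i j, ‖M i j‖ ≤ P i j) (k : ℕ) : ∀ i j, ‖(M ^ k) i j‖ ≤ (P ^ k) i j := by
  induction k with
  | zero =>
    intro i j
    simp only [pow_zero, Matrix.one_apply]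
    split <;> simp
  | succ k ih =>
    intro i j
    rw [pow_succ, pow_succ, Matrix.mul_apply, Matrix.mul_apply]
    calc ‖∑ a, (M ^ k) i a * M a j‖ ≤ ∑ a, ‖(M ^ k) i a * M a j‖ := norm_sum_le _ _
      _ ≤ ∑ a, (P ^ k) i a * P a j := by
          refine Finset.sum_le_sum fun a _ => ?_
          rw [norm_mul]
          exact mul_le_mul (ih i a) (h a j) (norm_nonneg _)
            (le_trans (norm_nonneg _) (ih i a))

theorem pow_entry_nonneg {q : ℕ} {P : Matrix (Fin q) (Fin q) ℝ}
    (hP : ∀ i j, 0 ≤ P i j) (k : ℕ) : ∀ i j, 0 ≤ (P ^ k) i j := by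
  intro i j
  have h : ∀ i j, ‖(P.map (fun a => (a:ℂ))) i j‖ ≤ P i j := by
    intro i j
    simp [Matrix.map_apply, Complex.norm_real, abs_of_nonneg (hP i j)]
  exact le_trans (norm_nonneg _) (pow_entry_le h k i j)

/-- spectral radius monotonicity under entrywise domination -/
theorem spectralRadius_mono {q : ℕ} (M : Matrix (Fin q) (Fin q) ℂ) (P : Matrix (Fin q) (Fin q) ℝ)
    (h : ∀ i j, ‖M i j‖ ≤ P i j) :
    spectralRadius ℂ M ≤ spectralRadius ℂ (P.map (fun a => (a:ℂ))) := by
  rcases Nat.eq_zero_or_pos q with hq | hq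
  · subst hq
    have hemp : spectrum ℂ M = ∅ := by
      ext z
      simp only [Set.mem_empty_iff_false, iff_false, spectrum.mem_iff, not_not]
      exact isUnit_of_subsingleton _
    rw [spectralRadius, hemp]
    simp
  · haveI : NeZero q := ⟨hq.ne'⟩
    apply iSup₂_le
    intro μ hμ
    have key : ∀ k : ℕ, 1 ≤ k →
        (‖μ‖₊ : ℝ≥0∞) ≤ (‖(P.map (fun a => (a:ℂ))) ^ k‖₊ : ℝ≥0∞) ^ (1 / (k:ℝ)) := by
      intro k hk
      have h1 : μ ^ k ∈ spectrum ℂ (M ^ k) :=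
        spectrum.pow_image_subset M k ⟨μ, hμ, rfl⟩
      have h2 : ‖μ ^ k‖ ≤ ‖M ^ k‖ := spectrum.norm_le_norm_of_mem h1
      have h3 : ‖M ^ k‖ ≤ ‖(P.map (fun a => (a:ℂ))) ^ k‖ := by
        apply nnnorm_mono
        intro i j
        rw [map_pow_comm]
        have := pow_entry_le h k i j
        simpa [Matrix.map_apply, Complex.norm_real,
          abs_of_nonneg (le_trans (norm_nonneg _) this)] using this
      have h4 : (‖μ‖₊ : ℝ≥0∞) ^ (k:ℝ) ≤ (‖(P.map (fun a => (a:ℂ))) ^ k‖₊ : ℝ≥0∞) := by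
        have : ‖μ‖₊ ^ k ≤ ‖(P.map (fun a => (a:ℂ))) ^ k‖₊ := by
          rw [← nnnorm_pow]
          exact_mod_cast le_trans h2 h3
        rw [ENNReal.rpow_natCast]
        exact_mod_cast this
      calc (‖μ‖₊ : ℝ≥0∞) = ((‖μ‖₊ : ℝ≥0∞) ^ (k:ℝ)) ^ (1/(k:ℝ)) := by
            rw [← ENNReal.rpow_mul, mul_one_div, div_self (Nat.cast_ne_zero.mpr (by omega)), ENNReal.rpow_one]
        _ ≤ _ := ENNReal.rpow_le_rpow h4 (by positivity)
    exact ge_of_tendsto (spectrum.pow_nnnorm_pow_one_div_tendsto_nhds_spectralRadius _)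
      (eventually_atTop.2 ⟨1, key⟩)



variable {q : ℕ}

theorem resolvent_core (N : Matrix (Fin q) (Fin q) ℝ)
    {c : ℝ} (hc : 0 < c)
    (hρ : spectralRadius ℂ (N.map (fun a => (a:ℂ))) < ENNReal.ofReal c)
    {s : ℂ} (hs : c ≤ ‖s‖) :
    IsUnit (s • (1 : Matrix (Fin q) (Fin q) ℂ) - N.map (fun a => (a:ℂ))) ∧
      HasSum (fun k : ℕ => s⁻¹ ^ (k+1) • (N.map (fun a => (a:ℂ))) ^ k)
        (Ring.inverse (s • (1 : Matrix (Fin q) (Fin q) ℂ) - N.map (fun a => (a:ℂ)))) := by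
  set Nc := N.map (fun a => (a:ℂ)) with hNcdef
  have hs0 : (0:ℝ) < ‖s‖ := lt_of_lt_of_le hc hs
  have hsne : s ≠ 0 := by
    intro h; rw [h, norm_zero] at hs0; exact lt_irrefl _ hs0
  -- summability
  obtain ⟨t, ht1, ht2⟩ := exists_between hρ
  have httop : t ≠ ⊤ := ne_top_of_lt ht2
  set t' : ℝ≥0 := t.toNNReal with ht'def
  have ht'c : (t' : ℝ) < c := by
    have : t < ENNReal.ofReal c := ht2
    rw [← ENNReal.coe_toNNReal httop, ENNReal.ofReal, ENNReal.coe_lt_coe] at this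
    calc (t' : ℝ) < (c.toNNReal : ℝ) := by exact_mod_cast this
      _ ≤ c := (Real.coe_toNNReal c hc.le).le
  have hbound : ∀ᶠ k : ℕ in atTop, ‖Nc ^ k‖ ≤ (t' : ℝ) ^ k := by
    have hgel := spectrum.pow_nnnorm_pow_one_div_tendsto_nhds_spectralRadius Nc
    have hev := hgel.eventually_lt_const ht1
    filter_upwards [hev, eventually_ge_atTop 1] with k hk hk1
    have hkne : (k : ℝ) ≠ 0 := Nat.cast_ne_zero.mpr (by omega)
    have h1 : (‖Nc ^ k‖₊ : ℝ≥0∞) < t ^ (k : ℝ) := by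
      have := ENNReal.rpow_lt_rpow hk (by positivity : (0:ℝ) < (k:ℝ))
      rwa [← ENNReal.rpow_mul, one_div, inv_mul_cancel₀ hkne, ENNReal.rpow_one] at this
    have h2 : (‖Nc ^ k‖₊ : ℝ≥0∞) < (t' : ℝ≥0∞) ^ (k:ℝ) := by
      rwa [ENNReal.coe_toNNReal httop]
    rw [← ENNReal.coe_rpow_of_nonneg _ (by positivity), ENNReal.coe_lt_coe] at h2
    have h3 : ‖Nc ^ k‖₊ ≤ t' ^ k := by
      rw [← NNReal.rpow_natCast t' k]
      exact h2.le
    exact_mod_cast h3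
  set g : ℕ → Matrix (Fin q) (Fin q) ℂ := fun k => s⁻¹ ^ (k+1) • Nc ^ k with hgdef
  have hsummable : Summable g := by
    apply Summable.of_norm_bounded_eventually_nat
      (g := fun k => ‖s‖⁻¹ * ((t' : ℝ) / ‖s‖) ^ k)
    · apply Summable.mul_left
      apply summable_geometric_of_lt_one (by positivity)
      rw [div_lt_one hs0]
      exact lt_of_lt_of_le ht'c hs
    · filter_upwards [hbound] with k hk
      have : ‖g k‖ = ‖s‖⁻¹ ^ (k+1) * ‖Nc ^ k‖ := by
        rw [hgdef]
        simp [norm_smul, norm_pow, norm_inv]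
      rw [this, div_pow, pow_succ']
      rw [mul_assoc]
      have h4 : ‖s‖⁻¹ ^ k * ‖Nc ^ k‖ ≤ (t':ℝ)^k / ‖s‖ ^ k := by
        rw [div_eq_mul_inv, mul_comm ((t':ℝ)^k), ← inv_pow]
        exact mul_le_mul_of_nonneg_left hk (by positivity)
      exact mul_le_mul_of_nonneg_left h4 (by positivity)
  obtain ⟨S, hS⟩ := hsummable
  set f : ℕ → Matrix (Fin q) (Fin q) ℂ := fun k => s⁻¹ ^ k • Nc ^ k with hfdef
  have hfg : ∀ k, f k = s • g k := by
    intro k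
    rw [hfdef, hgdef]
    simp only [smul_smul, pow_succ']
    congr 1
    rw [← mul_assoc, mul_inv_cancel₀ hsne, one_mul]
  have hfsummable : Summable f := by
    rw [show f = fun k => s • g k from funext hfg]
    exact hS.summable.const_smul s
  have hf0 : Tendsto f atTop (𝓝 0) := by
    have h1 : Tendsto g atTop (𝓝 0) := hS.summable.tendsto_atTop_zero
    have h2 := h1.const_smul s
    rw [smul_zero] at h2
    exact (funext hfg : f = fun k => s • g k) ▸ h2
  have htel : HasSum (fun k => f k - f (k+1)) 1 := by
    have hsum2 : Summable (fun k => f k - f (k+1)) :=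
      hfsummable.sub ((summable_nat_add_iff 1).mpr hfsummable)
    rw [hsum2.hasSum_iff_tendsto_nat]
    have heq : ∀ m : ℕ, ∑ i ∈ Finset.range m, (f i - f (i+1)) = f 0 - f m := by
      intro m; exact Finset.sum_range_sub' f m
    simp only [heq]
    have h5 : Tendsto (fun m => f 0 - f m) atTop (𝓝 (f 0 - 0)) :=
      tendsto_const_nhds.sub hf0
    have hf00 : f 0 = 1 := by simp [hfdef]
    rw [sub_zero] at h5
    simp only [hf00] at h5 ⊢
    exact h5
  have hpow : ∀ k : ℕ, Nc * Nc ^ k = Nc ^ k * Nc := fun k => by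
    rw [← pow_succ', ← pow_succ]
  have hkey_left : ∀ k, (s • (1 : Matrix (Fin q) (Fin q) ℂ) - Nc) * g k = f k - f (k+1) := by
    intro k
    rw [sub_mul, smul_mul_assoc, one_mul, ← hfg k]
    congr 1
    show Nc * (s⁻¹ ^ (k+1) • Nc ^ k) = s⁻¹ ^ (k+1) • Nc ^ (k+1)
    rw [mul_smul_comm, hpow, ← pow_succ]
  have hkey_right : ∀ k, g k * (s • (1 : Matrix (Fin q) (Fin q) ℂ) - Nc) = f k - f (k+1) := by
    intro k
    rw [mul_sub, mul_smul_comm, mul_one, ← hfg k]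
    congr 1
    show (s⁻¹ ^ (k+1) • Nc ^ k) * Nc = s⁻¹ ^ (k+1) • Nc ^ (k+1)
    rw [smul_mul_assoc, ← pow_succ]
  have hleft : (s • (1 : Matrix (Fin q) (Fin q) ℂ) - Nc) * S = 1 := by
    have h1 : HasSum (fun k => (s • (1 : Matrix (Fin q) (Fin q) ℂ) - Nc) * g k)
        ((s • (1 : Matrix (Fin q) (Fin q) ℂ) - Nc) * S) := hS.mul_left _
    rw [show (fun k => (s • (1 : Matrix (Fin q) (Fin q) ℂ) - Nc) * g k)
        = fun k => f k - f (k+1) from funext hkey_left] at h1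
    exact h1.unique htel
  have hright : S * (s • (1 : Matrix (Fin q) (Fin q) ℂ) - Nc) = 1 := by
    have h1 : HasSum (fun k => g k * (s • (1 : Matrix (Fin q) (Fin q) ℂ) - Nc))
        (S * (s • (1 : Matrix (Fin q) (Fin q) ℂ) - Nc)) := hS.mul_right _
    rw [show (fun k => g k * (s • (1 : Matrix (Fin q) (Fin q) ℂ) - Nc))
        = fun k => f k - f (k+1) from funext hkey_right] at h1
    exact h1.unique htel
  set u : (Matrix (Fin q) (Fin q) ℂ)ˣ :=
    ⟨s • (1 : Matrix (Fin q) (Fin q) ℂ) - Nc, S, hleft, hright⟩ with hudef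
  have hinv : Ring.inverse (s • (1 : Matrix (Fin q) (Fin q) ℂ) - Nc) = S := by
    have := Ring.inverse_unit u
    rw [hudef] at this
    exact this
  exact ⟨⟨u, rfl⟩, hinv ▸ hS⟩


end Stmt19Aux


namespace Stmt19Aux

theorem resolvent_entries {q : ℕ} (N : Matrix (Fin q) (Fin q) ℝ) (hN : ∀ i j, 0 ≤ N i j)
    {c : ℝ} (hc : 0 < c)
    (hρ : spectralRadius ℂ (N.map (fun a => (a:ℂ))) < ENNReal.ofReal c)
    {s : ℂ} (hs : c ≤ ‖s‖) :
    (∀ i j, Ring.inverse ((c:ℂ) • (1 : Matrix (Fin q) (Fin q) ℂ) - N.map (fun a => (a:ℂ))) i j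
        = (((Ring.inverse ((c:ℂ) • (1 : Matrix (Fin q) (Fin q) ℂ) - N.map (fun a => (a:ℂ))) i j).re : ℝ) : ℂ))
    ∧ (∀ i j, 0 ≤ (Ring.inverse ((c:ℂ) • (1 : Matrix (Fin q) (Fin q) ℂ) - N.map (fun a => (a:ℂ))) i j).re)
    ∧ (∀ i j, ‖Ring.inverse (s • (1 : Matrix (Fin q) (Fin q) ℂ) - N.map (fun a => (a:ℂ))) i j‖
        ≤ (Ring.inverse ((c:ℂ) • (1 : Matrix (Fin q) (Fin q) ℂ) - N.map (fun a => (a:ℂ))) i j).re) := by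
  set Nc := N.map (fun a => (a:ℂ)) with hNcdef
  have hcnorm : c ≤ ‖(c:ℂ)‖ := by
    rw [Complex.norm_real, Real.norm_eq_abs, abs_of_pos hc]
  have hcore_c := resolvent_core N hc hρ hcnorm
  have hcore_s := resolvent_core N hc hρ hs
  have hs0 : (0:ℝ) < ‖s‖ := lt_of_lt_of_le hc hs
  -- entrywise sums
  have hentry : ∀ (z : ℂ) (R : Matrix (Fin q) (Fin q) ℂ),
      HasSum (fun k : ℕ => z ^ (k+1) • Nc ^ k) R →
      ∀ i j, HasSum (fun k : ℕ => z ^ (k+1) * ((N ^ k) i j : ℂ)) (R i j) := by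
    intro z R hR i j
    have h1 := Pi.hasSum.mp (Pi.hasSum.mp hR i) j
    have h2 : ∀ k : ℕ, (z ^ (k+1) • Nc ^ k) i j = z ^ (k+1) * ((N ^ k) i j : ℂ) := by
      intro k
      rw [Matrix.smul_apply, map_pow_comm, Matrix.map_apply]
      simp
    simpa only [h2] using h1
  have hsum_c := hentry _ _ hcore_c.2
  have hsum_s := hentry _ _ hcore_s.2
  -- real series
  set g : Fin q → Fin q → ℕ → ℝ := fun i j k => c⁻¹ ^ (k+1) * (N ^ k) i j with hgdef
  have hg0 : ∀ i j k, 0 ≤ g i j k := by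
    intro i j k
    exact mul_nonneg (by positivity) (pow_entry_nonneg hN k i j)
  have hre : ∀ i j, HasSum (g i j)
      ((Ring.inverse ((c:ℂ) • (1 : Matrix (Fin q) (Fin q) ℂ) - Nc) i j).re) ∧
      (Ring.inverse ((c:ℂ) • (1 : Matrix (Fin q) (Fin q) ℂ) - Nc) i j).im = 0 := by
    intro i j
    have h1 := hsum_c i j
    have h2 : ∀ k : ℕ, (c:ℂ)⁻¹ ^ (k+1) * ((N ^ k) i j : ℂ) = ((g i j k : ℝ) : ℂ) := by
      intro k
      rw [hgdef]
      push_cast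
      ring
    rw [show (fun k : ℕ => (c:ℂ)⁻¹ ^ (k+1) * ((N ^ k) i j : ℂ)) = fun k => ((g i j k : ℝ) : ℂ)
      from funext h2] at h1
    have h3 := (Complex.hasSum_iff _ _).mp h1
    constructor
    · simpa using h3.1
    · have h4 : HasSum (fun _ : ℕ => (0:ℝ))
          ((Ring.inverse ((c:ℂ) • (1 : Matrix (Fin q) (Fin q) ℂ) - Nc) i j).im) := by
        simpa using h3.2
      exact (h4.unique hasSum_zero)
  refine ⟨fun i j => ?_, fun i j => ?_, fun i j => ?_⟩
  · apply Complex.ext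
    · simp
    · rw [Complex.ofReal_im]
      exact (hre i j).2
  · exact le_of_le_of_eq (hasSum_le (fun k => hg0 i j k) hasSum_zero (hre i j).1) rfl
  · -- norm bound
    have h1 := hsum_s i j
    have hnorm_term : ∀ k : ℕ, ‖s⁻¹ ^ (k+1) * ((N ^ k) i j : ℂ)‖ ≤ g i j k := by
      intro k
      rw [norm_mul, norm_pow, norm_inv, Complex.norm_real, Real.norm_eq_abs,
        abs_of_nonneg (pow_entry_nonneg hN k i j), hgdef]
      apply mul_le_mul_of_nonneg_right _ (pow_entry_nonneg hN k i j)
      apply pow_le_pow_left₀ (by positivity)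
      exact inv_anti₀ hc hs
    have hsumnorm : Summable (fun k : ℕ => ‖s⁻¹ ^ (k+1) * ((N ^ k) i j : ℂ)‖) :=
      Summable.of_nonneg_of_le (fun k => norm_nonneg _) hnorm_term (hre i j).1.summable
    calc ‖Ring.inverse (s • (1 : Matrix (Fin q) (Fin q) ℂ) - Nc) i j‖
        = ‖∑' k : ℕ, s⁻¹ ^ (k+1) * ((N ^ k) i j : ℂ)‖ := by rw [h1.tsum_eq]
      _ ≤ ∑' k : ℕ, ‖s⁻¹ ^ (k+1) * ((N ^ k) i j : ℂ)‖ := norm_tsum_le_tsum_norm hsumnorm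
      _ ≤ ∑' k, g i j k := Summable.tsum_le_tsum hnorm_term hsumnorm (hre i j).1.summable
      _ = _ := (hre i j).1.tsum_eq

end Stmt19Aux

namespace Stmt19Aux

theorem perron {q : ℕ} [NeZero q] (N : Matrix (Fin q) (Fin q) ℝ) (hN : ∀ i j, 0 ≤ N i j) :
    ∃ r : ℝ, 0 ≤ r ∧ ((r:ℂ) ∈ spectrum ℂ (N.map (fun a => (a:ℂ)))) ∧
      spectralRadius ℂ (N.map (fun a => (a:ℂ))) = ENNReal.ofReal r := by
  haveI : Nonempty (Fin q) := ⟨⟨0, Nat.pos_of_ne_zero (NeZero.ne q)⟩⟩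
  set Nc := N.map (fun a => (a:ℂ)) with hNcdef
  obtain ⟨μ, hμ, hnormμ⟩ := spectrum.exists_nnnorm_eq_spectralRadius (a := Nc)
  set r : ℝ := ‖μ‖ with hrdef
  have hr0 : 0 ≤ r := norm_nonneg μ
  have hrad : spectralRadius ℂ Nc = ENNReal.ofReal r := by
    rw [← hnormμ, hrdef, ofReal_norm, enorm_eq_nnnorm]
  refine ⟨r, hr0, ?_, hrad⟩
  by_contra hrs
  have hrpos : 0 < r := by
    rcases eq_or_lt_of_le hr0 with h | h
    · exfalso
      apply hrs
      have hμ0 : μ = 0 := norm_eq_zero.mp (by rw [← hrdef, ← h])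
      rw [show ((r:ℝ):ℂ) = μ by rw [← h, Complex.ofReal_zero, hμ0]]
      exact hμ
    · exact h
  have hrunit : IsUnit ((r:ℂ) • (1 : Matrix (Fin q) (Fin q) ℂ) - Nc) := by
    have := spectrum.notMem_iff.mp hrs
    rwa [Algebra.algebraMap_eq_smul_one] at this
  have hF : ContinuousAt (fun t : ℝ =>
      Ring.inverse ((t:ℂ) • (1 : Matrix (Fin q) (Fin q) ℂ) - Nc)) r := by
    have h1 : ContinuousAt Ring.inverse ((r:ℂ) • (1 : Matrix (Fin q) (Fin q) ℂ) - Nc) := by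
      have := NormedRing.inverse_continuousAt hrunit.unit
      rwa [IsUnit.unit_spec] at this
    have h2 : ContinuousAt (fun t : ℝ => ((t:ℂ) • (1 : Matrix (Fin q) (Fin q) ℂ) - Nc)) r :=
      ((Complex.continuous_ofReal.smul continuous_const).sub continuous_const).continuousAt
    exact ContinuousAt.comp (f := fun t : ℝ => ((t:ℂ) • (1 : Matrix (Fin q) (Fin q) ℂ) - Nc))
      (g := Ring.inverse) (x := r) h1 h2
  set C : ℝ := ‖Ring.inverse ((r:ℂ) • (1 : Matrix (Fin q) (Fin q) ℂ) - Nc)‖ + 1 with hCdef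
  have hC1 : 1 ≤ C := le_add_of_nonneg_left (norm_nonneg _)
  have hC0 : 0 < C := lt_of_lt_of_le one_pos hC1
  have hev : ∀ᶠ t : ℝ in 𝓝 r,
      ‖Ring.inverse ((t:ℂ) • (1 : Matrix (Fin q) (Fin q) ℂ) - Nc)‖ < C :=
    hF.norm.eventually_lt_const (lt_add_one _)
  rw [Metric.eventually_nhds_iff] at hev
  obtain ⟨δ₀, hδ₀, hball⟩ := hev
  set δ : ℝ := min (δ₀/2) (1/(2*C)) with hδdef
  have hδpos : 0 < δ := lt_min (by linarith) (by positivity)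
  set t : ℝ := r + δ with htdef
  have htr : r < t := by rw [htdef]; linarith
  have htpos : 0 < t := lt_trans hrpos htr
  have hρt : spectralRadius ℂ Nc < ENNReal.ofReal t := by
    rw [hrad]
    exact (ENNReal.ofReal_lt_ofReal_iff htpos).mpr htr
  set sμ : ℂ := ((t/r : ℝ) : ℂ) * μ with hsμdef
  have hsnorm : ‖sμ‖ = t := by
    rw [hsμdef, norm_mul, Complex.norm_real, Real.norm_eq_abs,
      abs_of_pos (div_pos htpos hrpos), ← hrdef, div_mul_cancel₀ _ hrpos.ne']
  have hts : t ≤ ‖sμ‖ := le_of_eq hsnorm.symm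
  have hcore := resolvent_core N htpos hρt hts
  have hentries := resolvent_entries N hN htpos hρt hts
  have hmono : ‖Ring.inverse (sμ • (1 : Matrix (Fin q) (Fin q) ℂ) - Nc)‖
      ≤ ‖Ring.inverse ((t:ℂ) • (1 : Matrix (Fin q) (Fin q) ℂ) - Nc)‖ := by
    apply nnnorm_mono
    intro i j
    calc ‖Ring.inverse (sμ • (1 : Matrix (Fin q) (Fin q) ℂ) - Nc) i j‖
        ≤ (Ring.inverse ((t:ℂ) • (1 : Matrix (Fin q) (Fin q) ℂ) - Nc) i j).re :=
          hentries.2.2 i j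
      _ ≤ ‖Ring.inverse ((t:ℂ) • (1 : Matrix (Fin q) (Fin q) ℂ) - Nc) i j‖ :=
          Complex.re_le_norm _
  have hFt : ‖Ring.inverse ((t:ℂ) • (1 : Matrix (Fin q) (Fin q) ℂ) - Nc)‖ < C := by
    apply hball
    rw [Real.dist_eq, htdef, add_sub_cancel_left, abs_of_pos hδpos]
    calc δ ≤ δ₀/2 := min_le_left _ _
      _ < δ₀ := by linarith
  set x : (Matrix (Fin q) (Fin q) ℂ)ˣ := hcore.1.unit with hxdef
  have hxval : (↑x : Matrix (Fin q) (Fin q) ℂ)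
      = sμ • (1 : Matrix (Fin q) (Fin q) ℂ) - Nc := IsUnit.unit_spec _
  have hxinv : (↑x⁻¹ : Matrix (Fin q) (Fin q) ℂ)
      = Ring.inverse (sμ • (1 : Matrix (Fin q) (Fin q) ℂ) - Nc) := by
    rw [← Ring.inverse_unit x, hxval]
  have hxinvC : ‖(↑x⁻¹ : Matrix (Fin q) (Fin q) ℂ)‖ < C := by
    rw [hxinv]; exact lt_of_le_of_lt hmono hFt
  have hxinvpos : 0 < ‖(↑x⁻¹ : Matrix (Fin q) (Fin q) ℂ)‖ := Units.norm_pos x⁻¹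
  have hdiff : ‖(μ • (1 : Matrix (Fin q) (Fin q) ℂ) - Nc) - ↑x‖
      < ‖(↑x⁻¹ : Matrix (Fin q) (Fin q) ℂ)‖⁻¹ := by
    rw [hxval]
    have h1 : (μ • (1 : Matrix (Fin q) (Fin q) ℂ) - Nc)
        - (sμ • (1 : Matrix (Fin q) (Fin q) ℂ) - Nc) = (μ - sμ) • (1 : Matrix (Fin q) (Fin q) ℂ)
      := by rw [sub_sub_sub_cancel_right, ← sub_smul]
    rw [h1, norm_smul, norm_one, mul_one]
    have h2 : ‖μ - sμ‖ = δ := by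
      have h3 : μ - sμ = ((1 - t/r : ℝ):ℂ) * μ := by
        rw [hsμdef]; push_cast; ring
      rw [h3, norm_mul, Complex.norm_real, Real.norm_eq_abs, ← hrdef]
      have h4 : |1 - t/r| = δ / r := by
        rw [abs_of_nonpos]
        · rw [htdef]; field_simp; ring
        · rw [sub_nonpos, le_div_iff₀ hrpos, one_mul]; exact htr.le
      rw [h4, div_mul_cancel₀ _ hrpos.ne']
    rw [h2]
    calc δ ≤ 1/(2*C) := min_le_right _ _
      _ < 1/C := by
        apply div_lt_div_of_pos_left one_pos hC0
        linarith
      _ = C⁻¹ := one_div C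
      _ < ‖(↑x⁻¹ : Matrix (Fin q) (Fin q) ℂ)‖⁻¹ := inv_strictAnti₀ hxinvpos hxinvC
  have hunit : IsUnit (μ • (1 : Matrix (Fin q) (Fin q) ℂ) - Nc) := by
    exact ⟨Units.ofNearby x (μ • (1 : Matrix (Fin q) (Fin q) ℂ) - Nc) hdiff, rfl⟩
  exact spectrum.mem_iff.mp hμ (by rwa [Algebra.algebraMap_eq_smul_one] : IsUnit _)

end Stmt19Aux

namespace Stmt19Aux

theorem main {n m₁ p₁ : ℕ}
    (A : Matrix (Fin n) (Fin n) ℝ) (B₁ : Matrix (Fin n) (Fin m₁) ℝ)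
    (C₁ : Matrix (Fin p₁) (Fin n) ℝ)
    (hA : IsMetzler A) (hHur : IsHurwitz A)
    (hB₁ : ∀ i j, 0 ≤ B₁ i j) (hC₁ : ∀ i j, 0 ≤ C₁ i j) :
    ∀ lam : ℂ, 0 ≤ lam.re →
      IsUnit (lam • (1 : Matrix (Fin n) (Fin n) ℂ) - A.map (fun a => (a : ℂ))) ∧
      (∀ i j,
        ‖(C₁.map (fun a => (a : ℂ)) *
            (lam • (1 : Matrix (Fin n) (Fin n) ℂ) - A.map (fun a => (a : ℂ)))⁻¹ *
            B₁.map (fun a => (a : ℂ))) i j‖ ≤ (C₁ * (-A)⁻¹ * B₁) i j) ∧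
      (∀ Δ : Matrix (Fin m₁) (Fin p₁) ℝ, (∀ i j, 0 ≤ Δ i j) →
        spectralRadius ℂ
            ((C₁.map (fun a => (a : ℂ)) *
              (lam • (1 : Matrix (Fin n) (Fin n) ℂ) - A.map (fun a => (a : ℂ)))⁻¹ *
              B₁.map (fun a => (a : ℂ))) * Δ.map (fun a => (a : ℂ))) ≤
          spectralRadius ℂ (((C₁ * (-A)⁻¹ * B₁) * Δ).map (fun a => (a : ℂ)))) := by
  intro lam hlam
  rcases Nat.eq_zero_or_pos n with hn | hn
  · subst hn
    have hunit : IsUnit (lam • (1 : Matrix (Fin 0) (Fin 0) ℂ) - A.map (fun a => (a : ℂ))) := by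
      have h1 : lam • (1 : Matrix (Fin 0) (Fin 0) ℂ) - A.map (fun a => (a : ℂ)) = 1 := by
        ext i j; exact i.elim0
      rw [h1]; exact isUnit_one
    refine ⟨hunit, fun i j => ?_, fun Δ hΔ => ?_⟩
    · simp [Matrix.mul_apply]
    · have hzero1 : (C₁.map (fun a => (a : ℂ)) *
          (lam • (1 : Matrix (Fin 0) (Fin 0) ℂ) - A.map (fun a => (a : ℂ)))⁻¹ *
          B₁.map (fun a => (a : ℂ))) * Δ.map (fun a => (a : ℂ)) = 0 := by
        ext i j; simp [Matrix.mul_apply]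
      have hzero2 : ((C₁ * (-A)⁻¹ * B₁) * Δ).map (fun a => (a : ℂ)) = 0 := by
        ext i j; simp [Matrix.mul_apply, Matrix.map_apply]
      rw [hzero1, hzero2]
  · haveI : NeZero n := ⟨hn.ne'⟩
    set Ac := A.map (fun a => (a : ℂ)) with hAc
    set c : ℝ := 1 + ∑ i, |A i i| with hcdef
    have hc : 0 < c := by
      have h0 : 0 ≤ ∑ i, |A i i| := Finset.sum_nonneg fun i _ => abs_nonneg _
      rw [hcdef]; linarith
    set N : Matrix (Fin n) (Fin n) ℝ := A + c • 1 with hNdef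
    have hNnn : ∀ i j, 0 ≤ N i j := by
      intro i j
      rw [hNdef]
      simp only [Matrix.add_apply, Matrix.smul_apply, Matrix.one_apply, smul_eq_mul]
      rcases eq_or_ne i j with h | h
      · subst h; rw [if_pos rfl, mul_one]
        have h1 : |A i i| ≤ ∑ k, |A k k| :=
          Finset.single_le_sum (f := fun k => |A k k|) (fun k _ => abs_nonneg _) (Finset.mem_univ i)
        have h2 := neg_abs_le (A i i)
        rw [hcdef]; linarith
      · rw [if_neg h, mul_zero, add_zero]; exact hA i j h
    set Nc := N.map (fun a => (a : ℂ)) with hNc0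
    have hNc : Nc = Ac + (c:ℂ) • (1 : Matrix (Fin n) (Fin n) ℂ) := by
      ext i j
      simp only [hNc0, hAc, hNdef, Matrix.map_apply, Matrix.add_apply, Matrix.smul_apply,
        Matrix.one_apply, smul_eq_mul]
      split <;> push_cast <;> ring
    obtain ⟨r, hr0, hrmem, hrad⟩ := perron N hNnn
    have hrc : r < c := by
      have hNalg : Nc = algebraMap ℂ (Matrix (Fin n) (Fin n) ℂ) ((c:ℝ):ℂ) + Ac := by
        rw [hNc, Algebra.algebraMap_eq_smul_one, add_comm]
      have hspec := spectrum.singleton_add_eq Ac (((c:ℝ):ℂ))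
      rw [← hNalg] at hspec
      rw [← hspec] at hrmem
      obtain ⟨x, hx, y, hy, hxy⟩ := Set.mem_add.mp hrmem
      rw [Set.mem_singleton_iff] at hx
      subst hx
      have hre := hHur y hy
      have hr_eq : (r:ℝ) = c + y.re := by
        have h6 := congrArg Complex.re hxy
        simpa using h6.symm
      linarith
    have hρ : spectralRadius ℂ Nc < ENNReal.ofReal c := by
      rw [hrad]
      exact (ENNReal.ofReal_lt_ofReal_iff hc).mpr hrc
    set s : ℂ := lam + (c:ℂ) with hsdef
    have hsn : c ≤ ‖s‖ := by
      calc c ≤ s.re := by rw [hsdef]; simp; linarith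
        _ ≤ ‖s‖ := Complex.re_le_norm _
    have hcn : c ≤ ‖((c:ℝ):ℂ)‖ := by
      rw [Complex.norm_real, Real.norm_eq_abs, abs_of_pos hc]
    have hcore := resolvent_core N hc hρ hsn
    have hcore0 := resolvent_core N hc hρ hcn
    have hentries := resolvent_entries N hNnn hc hρ hsn
    have heq : lam • (1 : Matrix (Fin n) (Fin n) ℂ) - Ac
        = s • (1 : Matrix (Fin n) (Fin n) ℂ) - Nc := by
      rw [hNc, hsdef, add_smul]; abel
    have hunit : IsUnit (lam • (1 : Matrix (Fin n) (Fin n) ℂ) - Ac) := by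
      rw [heq]; exact hcore.1
    set Rc : Matrix (Fin n) (Fin n) ℝ := Matrix.of (fun i j =>
      (Ring.inverse ((c:ℂ) • (1 : Matrix (Fin n) (Fin n) ℂ) - Nc) i j).re) with hRcdef
    have hRcmap : Rc.map (fun a => (a : ℂ))
        = Ring.inverse ((c:ℂ) • (1 : Matrix (Fin n) (Fin n) ℂ) - Nc) := by
      ext i j
      exact (hentries.1 i j).symm
    have hmapc : (-A).map (fun a => (a : ℂ))
        = (c:ℂ) • (1 : Matrix (Fin n) (Fin n) ℂ) - Nc := by
      ext i j
      simp only [hNc0, hNdef, Matrix.map_apply, Matrix.neg_apply, Matrix.sub_apply,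
        Matrix.add_apply, Matrix.smul_apply, Matrix.one_apply, smul_eq_mul]
      split <;> push_cast <;> ring
    have hinvA : (-A)⁻¹ = Rc := by
      apply Matrix.inv_eq_right_inv
      have hinj : Function.Injective
          (fun Q : Matrix (Fin n) (Fin n) ℝ => Q.map (fun a => (a : ℂ))) := by
        intro Q Q' h; ext i j; exact Complex.ofReal_injective (congrFun (congrFun h i) j)
      apply hinj
      show ((-A) * Rc).map (fun a => (a : ℂ)) = (1 : Matrix (Fin n) (Fin n) ℝ).map (fun a => (a : ℂ))
      have hm : ∀ Q : Matrix (Fin n) (Fin n) ℝ,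
          Q.map (fun a => (a : ℂ)) = (algebraMap ℝ ℂ).mapMatrix Q := fun _ => rfl
      have hmul : ((-A) * Rc).map (fun a => (a : ℂ))
          = (-A).map (fun a => (a : ℂ)) * Rc.map (fun a => (a : ℂ)) := by
        rw [hm, hm, hm, ← _root_.map_mul]
      rw [hmul, hmapc, hRcmap, Ring.mul_inverse_cancel _ hcore0.1]
      ext i j
      simp [Matrix.map_apply, Matrix.one_apply, apply_ite]
    have hX : (lam • (1 : Matrix (Fin n) (Fin n) ℂ) - Ac)⁻¹
        = Ring.inverse (s • (1 : Matrix (Fin n) (Fin n) ℂ) - Nc) := by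
      rw [heq, Matrix.nonsing_inv_eq_ringInverse]
    have hGbound : ∀ i j, ‖(C₁.map (fun a => (a : ℂ)) *
        (lam • (1 : Matrix (Fin n) (Fin n) ℂ) - Ac)⁻¹ *
        B₁.map (fun a => (a : ℂ))) i j‖ ≤ (C₁ * (-A)⁻¹ * B₁) i j := by
      intro i j
      rw [hX, hinvA]
      simp only [Matrix.mul_apply, Matrix.map_apply]
      calc ‖∑ b, (∑ a, (C₁ i a : ℂ)
              * Ring.inverse (s • (1 : Matrix (Fin n) (Fin n) ℂ) - Nc) a b) * (B₁ b j : ℂ)‖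
          ≤ ∑ b, ‖(∑ a, (C₁ i a : ℂ)
              * Ring.inverse (s • (1 : Matrix (Fin n) (Fin n) ℂ) - Nc) a b) * (B₁ b j : ℂ)‖ :=
            norm_sum_le _ _
        _ ≤ ∑ b, (∑ a, C₁ i a * Rc a b) * B₁ b j := by
            apply Finset.sum_le_sum
            intro b _
            rw [norm_mul, Complex.norm_real, Real.norm_eq_abs, abs_of_nonneg (hB₁ b j)]
            apply mul_le_mul_of_nonneg_right _ (hB₁ b j)
            calc ‖∑ a, (C₁ i a : ℂ)
                    * Ring.inverse (s • (1 : Matrix (Fin n) (Fin n) ℂ) - Nc) a b‖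
                ≤ ∑ a, ‖(C₁ i a : ℂ)
                    * Ring.inverse (s • (1 : Matrix (Fin n) (Fin n) ℂ) - Nc) a b‖ :=
                  norm_sum_le _ _
              _ ≤ ∑ a, C₁ i a * Rc a b := by
                  apply Finset.sum_le_sum
                  intro a _
                  rw [norm_mul, Complex.norm_real, Real.norm_eq_abs, abs_of_nonneg (hC₁ i a)]
                  exact mul_le_mul_of_nonneg_left (hentries.2.2 a b) (hC₁ i a)
    refine ⟨hunit, hGbound, ?_⟩
    intro Δ hΔ
    have hMP : ∀ i j, ‖((C₁.map (fun a => (a : ℂ)) *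
        (lam • (1 : Matrix (Fin n) (Fin n) ℂ) - Ac)⁻¹ *
        B₁.map (fun a => (a : ℂ))) * Δ.map (fun a => (a : ℂ))) i j‖
        ≤ ((C₁ * (-A)⁻¹ * B₁) * Δ) i j := by
      intro i j
      rw [Matrix.mul_apply, Matrix.mul_apply]
      calc ‖∑ k, (C₁.map (fun a => (a : ℂ)) *
              (lam • (1 : Matrix (Fin n) (Fin n) ℂ) - Ac)⁻¹ *
              B₁.map (fun a => (a : ℂ))) i k * (Δ.map (fun a => (a : ℂ))) k j‖
          ≤ ∑ k, ‖(C₁.map (fun a => (a : ℂ)) *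
              (lam • (1 : Matrix (Fin n) (Fin n) ℂ) - Ac)⁻¹ *
              B₁.map (fun a => (a : ℂ))) i k * (Δ.map (fun a => (a : ℂ))) k j‖ :=
            norm_sum_le _ _
        _ ≤ ∑ k, (C₁ * (-A)⁻¹ * B₁) i k * Δ k j := by
            apply Finset.sum_le_sum
            intro k _
            rw [norm_mul]
            have h7 : ‖(Δ.map (fun a => (a : ℂ))) k j‖ = Δ k j := by
              rw [Matrix.map_apply, Complex.norm_real, Real.norm_eq_abs, abs_of_nonneg (hΔ k j)]
            rw [h7]
            exact mul_le_mul_of_nonneg_right (hGbound i k) (hΔ k j)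
    exact spectralRadius_mono _ _ hMP

end Stmt19Aux

end AuxSection

/-- for `A` Metzler and Hurwitz and `B₁, C₁ ≥ 0`, for every `λ` with
`Re λ ≥ 0` the matrix `λI − A` is invertible, the entrywise modulus of
`G₁₁(λ) = C₁(λI−A)⁻¹B₁` is bounded by `G₁₁(0) = C₁(−A)⁻¹B₁`, and consequently
`ρ(G₁₁(λ)Δ) ≤ ρ(G₁₁(0)Δ)` for every entrywise nonnegative `Δ`. -/
theorem stmt19 {n m₁ p₁ : ℕ}
    (A : Matrix (Fin n) (Fin n) ℝ) (B₁ : Matrix (Fin n) (Fin m₁) ℝ)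
    (C₁ : Matrix (Fin p₁) (Fin n) ℝ)
    (hA : IsMetzler A) (hHur : IsHurwitz A)
    (hB₁ : ∀ i j, 0 ≤ B₁ i j) (hC₁ : ∀ i j, 0 ≤ C₁ i j) :
    ∀ lam : ℂ, 0 ≤ lam.re →
      IsUnit (lam • (1 : Matrix (Fin n) (Fin n) ℂ) - A.map (fun a => (a : ℂ))) ∧
      (∀ i j,
        ‖(C₁.map (fun a => (a : ℂ)) *
            (lam • (1 : Matrix (Fin n) (Fin n) ℂ) - A.map (fun a => (a : ℂ)))⁻¹ *
            B₁.map (fun a => (a : ℂ))) i j‖ ≤ (C₁ * (-A)⁻¹ * B₁) i j) ∧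
      (∀ Δ : Matrix (Fin m₁) (Fin p₁) ℝ, (∀ i j, 0 ≤ Δ i j) →
        spectralRadius ℂ
            ((C₁.map (fun a => (a : ℂ)) *
              (lam • (1 : Matrix (Fin n) (Fin n) ℂ) - A.map (fun a => (a : ℂ)))⁻¹ *
              B₁.map (fun a => (a : ℂ))) * Δ.map (fun a => (a : ℂ))) ≤
          spectralRadius ℂ (((C₁ * (-A)⁻¹ * B₁) * Δ).map (fun a => (a : ℂ)))) :=
  Stmt19Aux.main A B₁ C₁ hA hHur hB₁ hC₁
end
end
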